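/- arXiv:1010.6278 — 5 statements merged into one kernel-verified Lean document; each statement's English description precedes it below -/
import Mathlib

section
/- For each fixed positive integer k, the class Apex^k F has growth constant 2^k · e; that is, (|(Apex^k F)_n| / n!)^{1/n} → 2^k e as n → ∞. -/
open SimpleGraph Filter Real

def IsBlocker {V : Type*} (G : SimpleGraph V) (B : Set V) : Prop :=
  (G.induce Bᶜ).IsAcyclic

def HasDisjointCycles {V : Type*} (G : SimpleGraph V) (m : ℕ) : Prop :=
  ∃ c : Fin m → (Σ v : V, G.Walk v v),
    (∀ i, (c i).2.IsCycle) ∧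
    ∀ i j, i ≠ j → ∀ v, v ∈ (c i).2.support → v ∉ (c j).2.support

noncomputable def apexCount (n k : ℕ) : ℕ :=
  Nat.card {G : SimpleGraph (Fin n) // ∃ B : Finset (Fin n), B.card ≤ k ∧ IsBlocker G ↑B}

noncomputable def exCount (n k : ℕ) : ℕ :=
  Nat.card {G : SimpleGraph (Fin n) // ¬ HasDisjointCycles G k}

noncomputable def forestCount (n : ℕ) : ℕ :=
  Nat.card {G : SimpleGraph (Fin n) // G.IsAcyclic}

def IsSpike {V : Type*} (G : SimpleGraph V) (u v : V) : Prop :=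
  G.Adj u v ∧ (G.neighborSet u).ncard = 1 ∧ (G.neighborSet v).ncard = 2 ∧
  ¬ ∃ a b c : V, a ≠ b ∧ b ≠ c ∧ a ≠ c ∧ G.Adj a b ∧ G.Adj b c ∧ ¬ G.Adj a c ∧
      (G.connectedComponentMk u).supp = {a, b, c}


lemma exp_le_pow_succ {s : ℕ} (hs : 1 ≤ s) :
    Real.exp 1 ≤ (((s:ℝ)+1)/s) ^ (s+1) := by
  have hs0 : (0:ℝ) < s := by exact_mod_cast hs
  set y : ℝ := 1/((s:ℝ)+1) with hy
  have hy0 : (0:ℝ) < 1 - y := by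
    rw [hy, sub_pos, div_lt_one (by positivity)]; linarith
  have hx : 1 - y ≤ (Real.exp y)⁻¹ := by
    have := Real.add_one_le_exp (-y)
    rwa [Real.exp_neg, neg_add_eq_sub] at this
  have h2 : (1 - y) * Real.exp y ≤ 1 := by
    have := mul_le_mul_of_nonneg_right hx (le_of_lt (Real.exp_pos y))
    rwa [inv_mul_cancel₀ (ne_of_gt (Real.exp_pos y))] at this
  have h1 : Real.exp y ≤ ((s:ℝ)+1)/s := by
    have h3 : Real.exp y ≤ 1/(1-y) := by
      rw [le_div_iff₀ hy0]; linarith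
    have h4 : 1/(1-y) = ((s:ℝ)+1)/s := by
      rw [hy]; field_simp; rw [add_sub_cancel_right, div_self hs0.ne']
    linarith
  calc Real.exp 1 = Real.exp y ^ (s+1) := by
        rw [← Real.exp_nat_mul, hy]
        congr 1
        push_cast
        field_simp
    _ ≤ (((s:ℝ)+1)/s) ^ (s+1) := pow_le_pow_left₀ (le_of_lt (Real.exp_pos _)) h1 _

lemma factorial_le_aux : ∀ s : ℕ, 1 ≤ s → ((s.factorial : ℝ)) ≤ Real.exp 1 * s * ((s:ℝ)/Real.exp 1)^s := by
  intro s
  induction s with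
  | zero => omega
  | succ t ih =>
    intro _
    rcases Nat.eq_zero_or_pos t with rfl | ht
    · simp [Nat.factorial]
    · have h1 := ih ht
      have hexp := Real.exp_pos 1
      have ht0 : (0:ℝ) < t := by exact_mod_cast ht
      have h3 : Real.exp 1 * (t:ℝ)^(t+1) ≤ ((t:ℝ)+1)^(t+1) := by
        have h2 := exp_le_pow_succ ht
        rw [div_pow, le_div_iff₀ (by positivity)] at h2
        linarith
      have key : (t:ℝ) * ((t:ℝ)/Real.exp 1)^t ≤ (((t:ℝ)+1)/Real.exp 1)^(t+1) := by
        rw [div_pow, div_pow, mul_div_assoc', div_le_div_iff₀ (by positivity) (by positivity)]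
        calc (t:ℝ) * (t:ℝ)^t * Real.exp 1 ^(t+1)
            = (Real.exp 1 * (t:ℝ)^(t+1)) * Real.exp 1 ^ t := by ring
          _ ≤ ((t:ℝ)+1)^(t+1) * Real.exp 1 ^ t :=
              mul_le_mul_of_nonneg_right h3 (by positivity)
      have heq : ((t+1).factorial : ℝ) = ((t:ℝ)+1) * t.factorial := by
        rw [Nat.factorial_succ]; push_cast; ring
      rw [heq]
      calc ((t:ℝ)+1) * t.factorial ≤ ((t:ℝ)+1) * (Real.exp 1 * t * ((t:ℝ)/Real.exp 1)^t) := by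
            apply mul_le_mul_of_nonneg_left h1 (by positivity)
        _ = Real.exp 1 * ((t:ℝ)+1) * ((t:ℝ) * ((t:ℝ)/Real.exp 1)^t) := by ring
        _ ≤ Real.exp 1 * ((t:ℝ)+1) * (((t:ℝ)+1)/Real.exp 1)^(t+1) := by
            apply mul_le_mul_of_nonneg_left key (by positivity)
        _ = Real.exp 1 * ((t+1:ℕ):ℝ) * ((((t+1:ℕ)):ℝ)/Real.exp 1)^(t+1) := by push_cast; ring

lemma pow_self_le_exp_mul_factorial : ∀ n : ℕ, ((n:ℝ))^n ≤ Real.exp 1 ^ n * n.factorial := by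
  intro n
  induction n with
  | zero => simp
  | succ t ih =>
    have key : ((t:ℝ)+1)^t ≤ Real.exp 1 * (t:ℝ)^t := by
      rcases Nat.eq_zero_or_pos t with rfl | ht
      · simp
      · have ht0 : (0:ℝ) < t := by exact_mod_cast ht
        have h1 : (1:ℝ) + 1/t ≤ Real.exp (1/t) := by
          have := Real.add_one_le_exp (1/(t:ℝ)); linarith
        have h2 : ((1:ℝ) + 1/t)^t ≤ Real.exp (1/t) ^ t :=
          pow_le_pow_left₀ (by positivity) h1 t
        have h3 : Real.exp (1/(t:ℝ)) ^ t = Real.exp 1 := by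
          rw [← Real.exp_nat_mul, mul_one_div, div_self (ne_of_gt ht0)]
        have h4 : ((t:ℝ)+1)^t = ((1:ℝ)+1/t)^t * (t:ℝ)^t := by
          rw [← mul_pow]; congr 1; field_simp
        rw [h4, ← h3]
        exact mul_le_mul_of_nonneg_right h2 (by positivity)
    have heq : ((t+1:ℕ):ℝ)^(t+1) = ((t:ℝ)+1) * ((t:ℝ)+1)^t := by push_cast; ring
    rw [heq]
    calc ((t:ℝ)+1) * ((t:ℝ)+1)^t ≤ ((t:ℝ)+1) * (Real.exp 1 * (t:ℝ)^t) :=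
          mul_le_mul_of_nonneg_left key (by positivity)
      _ ≤ ((t:ℝ)+1) * (Real.exp 1 * (Real.exp 1 ^t * t.factorial)) := by
          apply mul_le_mul_of_nonneg_left _ (by positivity)
          exact mul_le_mul_of_nonneg_left ih (le_of_lt (Real.exp_pos 1))
      _ = Real.exp 1 ^ (t+1) * (((t:ℝ)+1) * t.factorial) := by ring
      _ = Real.exp 1 ^ (t+1) * ((t+1).factorial) := by
          rw [Nat.factorial_succ]; push_cast; ring

lemma fact_le_fact_mul_pow : ∀ (b a : ℕ), a ≤ b → b.factorial ≤ a.factorial * b^(b-a) := by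
  intro b
  induction b with
  | zero => intro a h; interval_cases a; simp
  | succ t ih =>
    intro a h
    rcases Nat.eq_or_lt_of_le h with rfl | h2
    · simp
    · have h3 : a ≤ t := by omega
      have h4 := ih a h3
      have heq : (t+1).factorial = (t+1) * t.factorial := rfl
      rw [heq]
      have h5 : t+1-a = (t-a)+1 := by omega
      rw [h5, pow_succ]
      calc (t+1) * t.factorial ≤ (t+1) * (a.factorial * t^(t-a)) :=
            Nat.mul_le_mul_left _ h4
        _ ≤ (t+1) * (a.factorial * (t+1)^(t-a)) := by
            apply Nat.mul_le_mul_left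
            apply Nat.mul_le_mul_left
            exact Nat.pow_le_pow_left (by omega) _
        _ = a.factorial * ((t+1)^(t-a) * (t+1)) := by ring

lemma tendsto_log_nat_div : Tendsto (fun n : ℕ => Real.log n / n) atTop (nhds 0) := by
  have h := Real.isLittleO_log_id_atTop.tendsto_div_nhds_zero
  exact h.comp tendsto_natCast_atTop_atTop


section GraphHelpers

variable {V : Type*}

lemma isAcyclic_of_embedding {W : Type*} {G : SimpleGraph V} {G' : SimpleGraph W}
    (f : G ↪g G') (h : G'.IsAcyclic) : G.IsAcyclic := by
  intro v c hc
  exact h (c.map f.toHom) (hc.map f.injective)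

lemma isAcyclic_induce_mono {G : SimpleGraph V} {s t : Set V} (hst : s ≤ t)
    (h : (G.induce t).IsAcyclic) : (G.induce s).IsAcyclic :=
  isAcyclic_of_embedding (G.induceHomOfLE hst) h

lemma isAcyclic_of_parent [DecidableEq V] {G : SimpleGraph V} (L : V → ℕ) (P : V → V)
    (hcl : ∀ u v, G.Adj u v → (u = P v ∧ L u + 1 = L v) ∨ (v = P u ∧ L v + 1 = L u)) :
    G.IsAcyclic := by
  intro v c hc
  obtain ⟨u, hu, hmax⟩ := Finset.exists_max_image c.support.toFinset L
    ⟨v, by simp⟩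
  rw [List.mem_toFinset] at hu
  have hc' := hc.rotate hu
  have hsup : ∀ w, w ∈ (c.rotate u hu).support → L w ≤ L u := by
    intro w hw
    apply hmax
    rw [List.mem_toFinset]
    rw [Walk.support_eq_cons] at hw
    rcases List.mem_cons.mp hw with rfl | hw2
    · exact hu
    · have hperm := Walk.support_rotate c u hu
      have h2 : w ∈ c.support.tail := hperm.mem_iff.mp hw2
      exact List.mem_of_mem_tail h2
  obtain ⟨w, hadj, q, hq⟩ := Walk.not_nil_iff.mp hc'.not_nil
  rw [hq] at hc' hsup
  -- the last vertex before u
  have hqnotnil : ¬ q.reverse.Nil := by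
    rw [Walk.not_nil_iff_lt_length, Walk.length_reverse]
    have h3 := hc'.three_le_length
    rw [Walk.length_cons] at h3
    omega
  obtain ⟨w₂, hadj₂, q₂, hq₂⟩ := Walk.not_nil_iff.mp hqnotnil
  have hwmem : w ∈ (Walk.cons hadj q).support := by
    rw [Walk.support_cons]
    exact List.mem_cons_of_mem _ q.start_mem_support
  have hw2mem : w₂ ∈ (Walk.cons hadj q).support := by
    rw [Walk.support_cons]
    apply List.mem_cons_of_mem
    have h1 : w₂ ∈ q.reverse.support := by
      rw [hq₂, Walk.support_cons]
      exact List.mem_cons_of_mem _ q₂.start_mem_support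
    rwa [Walk.support_reverse, List.mem_reverse] at h1
  have hPw : w = P u := by
    rcases hcl u w hadj with ⟨_, h1⟩ | ⟨h1, _⟩
    · have := hsup w hwmem; omega
    · exact h1
  have hPw₂ : w₂ = P u := by
    rcases hcl u w₂ hadj₂ with ⟨_, h1⟩ | ⟨h1, _⟩
    · have := hsup w₂ hw2mem; omega
    · exact h1
  have hww : w = w₂ := hPw.trans hPw₂.symm
  -- the edge s(u,w) appears twice
  have he2 : s(u, w₂) ∈ q.edges := by
    have h1 : s(u, w₂) ∈ q.reverse.edges := by
      rw [hq₂, Walk.edges_cons]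
      exact List.mem_cons_self
    rwa [Walk.edges_reverse, List.mem_reverse] at h1
  have hnodup := hc'.isTrail.edges_nodup
  rw [Walk.edges_cons] at hnodup
  have := (List.nodup_cons.mp hnodup).1
  rw [← hww] at he2
  exact this he2

end GraphHelpers


section Parent

open scoped Classical

variable {α : Type*} [Fintype α] [LinearOrder α] (H : SimpleGraph α)

noncomputable def groot (x : α) : α :=
  (Finset.univ.filter (fun y => H.Reachable x y)).min'
    ⟨x, Finset.mem_filter.mpr ⟨Finset.mem_univ x, Reachable.refl x⟩⟩

lemma groot_reachable (x : α) : H.Reachable x (groot H x) := by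
  have h := (Finset.univ.filter (fun y => H.Reachable x y)).min'_mem
    ⟨x, Finset.mem_filter.mpr ⟨Finset.mem_univ x, Reachable.refl x⟩⟩
  rw [Finset.mem_filter] at h
  exact h.2

lemma groot_eq_of_reachable {x y : α} (h : H.Reachable x y) : groot H x = groot H y := by
  unfold groot
  have hset : (Finset.univ.filter (fun z => H.Reachable x z))
      = (Finset.univ.filter (fun z => H.Reachable y z)) := by
    ext z
    simp only [Finset.mem_filter, Finset.mem_univ, true_and]
    exact ⟨fun hz => h.symm.trans hz, fun hz => h.trans hz⟩
  congr 1

noncomputable def pm (x : α) : α :=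
  if _h : x = groot H x then x
  else ((groot_reachable H x).some.toPath).1.getVert 1

lemma pm_adj {x : α} (h : x ≠ groot H x) : H.Adj x (pm H x) := by
  unfold pm
  rw [dif_neg h]
  set p := ((groot_reachable H x).some.toPath).1 with hp
  have hlen : 0 < p.length := by
    rcases Nat.eq_zero_or_pos p.length with h0 | h1
    · exact absurd (Walk.eq_of_length_eq_zero h0) h
    · exact h1
  have h2 := p.adj_getVert_succ hlen
  rwa [Walk.getVert_zero] at h2

lemma pm_root (x : α) (h : x = groot H x) : pm H x = x := by
  unfold pm; rw [dif_pos h]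

lemma pm_spec (hac : H.IsAcyclic) {x y : α} (h : H.Adj x y) :
    pm H x = y ∨ pm H y = x := by
  have hpu := isAcyclic_iff_path_unique.mp hac
  have hr : groot H x = groot H y := groot_eq_of_reachable H h.reachable
  by_cases hx : x = groot H x
  · right
    have hy : y ≠ groot H y := by
      intro hy
      exact h.ne (by rw [hx, hr, ← hy])
    unfold pm
    rw [dif_neg hy]
    have hxg : x = groot H y := by rw [hx, hr]
    have hsing : ((groot_reachable H y).some.toPath)
        = ⟨(Walk.cons h.symm Walk.nil).copy rfl hxg, by
            rw [Walk.isPath_copy]; simp [h.ne']⟩ := hpu _ _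
    rw [hsing]
    simp [Walk.getVert_copy, Walk.getVert_cons_succ]
  · by_cases hy : y = groot H y
    · left
      have hx' : x ≠ groot H x := hx
      unfold pm
      rw [dif_neg hx']
      have hyg : y = groot H x := by rw [hy, hr]
      have hsing : ((groot_reachable H x).some.toPath)
          = ⟨(Walk.cons h Walk.nil).copy rfl hyg, by
              rw [Walk.isPath_copy]; simp [h.ne]⟩ := hpu _ _
      rw [hsing]
      simp [Walk.getVert_copy, Walk.getVert_cons_succ]
    · set py := ((groot_reachable H y).some.toPath) with hpy
      by_cases hmem : x ∈ py.1.support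
      · right
        unfold pm
        rw [dif_neg hy]
        have htake := py.1.take_spec hmem
        have hq : py.1.takeUntil x hmem = Walk.cons h.symm Walk.nil := by
          have h1 : (⟨py.1.takeUntil x hmem, py.2.takeUntil hmem⟩ : H.Path y x)
              = ⟨Walk.cons h.symm Walk.nil, by simp [h.ne']⟩ := hpu _ _
          exact congrArg Subtype.val h1
        have h2 : py.1.getVert 1 = x := by
          rw [← htake, hq, Walk.cons_append]
          rw [Walk.getVert_cons_succ, Walk.getVert_zero]
        rw [← hpy, h2]
      · left
        unfold pm
        rw [dif_neg hx]
        have hW : ((Walk.cons h py.1).copy rfl hr.symm).IsPath := by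
          rw [Walk.isPath_copy]
          exact py.2.cons hmem
        have hsing : ((groot_reachable H x).some.toPath)
            = ⟨(Walk.cons h py.1).copy rfl hr.symm, hW⟩ := hpu _ _
        rw [hsing]
        simp [Walk.getVert_copy, Walk.getVert_cons_succ]

lemma pm_iff (hac : H.IsAcyclic) {x y : α} (hne : x ≠ y) :
    H.Adj x y ↔ (pm H x = y ∨ pm H y = x) := by
  constructor
  · exact pm_spec H hac
  · rintro (h | h)
    · have hx : x ≠ groot H x := by
        intro hx
        rw [pm_root H x hx] at h
        exact hne h
      have := pm_adj H hx
      rwa [h] at this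
    · have hy : y ≠ groot H y := by
        intro hy
        rw [pm_root H y hy] at h
        exact hne h.symm
      have := pm_adj H hy
      rw [h] at this
      exact this.symm

end Parent

section Upper

open scoped Classical

variable {n k : ℕ}

def TU (n k : ℕ) := {G : SimpleGraph (Fin n) // ∃ B : Finset (Fin n), B.card ≤ k ∧ IsBlocker G ↑B}

noncomputable def BtU (hn : 0 < n) (G : TU n k) : Finset (Fin n) :=
  if (Classical.choose G.2).Nonempty then Classical.choose G.2 else {(⟨0, hn⟩ : Fin n)}

lemma BtU_nonempty (hn : 0 < n) (G : TU n k) : (BtU hn G).Nonempty := by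
  unfold BtU
  split
  · assumption
  · exact ⟨_, Finset.mem_singleton_self _⟩

lemma BtU_card (hk : 1 ≤ k) (hn : 0 < n) (G : TU n k) : (BtU hn G).card ≤ k := by
  unfold BtU
  split
  · exact (Classical.choose_spec G.2).1
  · simpa using hk

lemma BtU_blocker (hn : 0 < n) (G : TU n k) : IsBlocker G.1 ↑(BtU hn G) := by
  unfold BtU
  have hspec := (Classical.choose_spec G.2).2
  split
  · exact hspec
  · next h =>
    rw [Finset.not_nonempty_iff_eq_empty] at h
    rw [h] at hspec
    unfold IsBlocker at hspec ⊢
    apply isAcyclic_induce_mono _ hspec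
    intro x hx
    simp

noncomputable def bU (hn : 0 < n) (G : TU n k) : Fin k → Fin n := fun i =>
  (BtU hn G).toList.get ⟨i.val % (BtU hn G).toList.length, Nat.mod_lt _ (by
    rw [Finset.length_toList]; exact Finset.card_pos.mpr (BtU_nonempty hn G))⟩

lemma bU_mem (hk : 1 ≤ k) (hn : 0 < n) (G : TU n k) (x : Fin n) :
    x ∈ BtU hn G ↔ ∃ i : Fin k, bU hn G i = x := by
  constructor
  · intro hx
    rw [← Finset.mem_toList] at hx
    obtain ⟨j, hj⟩ := List.mem_iff_get.mp hx
    have hjk : j.val < k := by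
      have h1 : (BtU hn G).toList.length ≤ k := by
        rw [Finset.length_toList]; exact BtU_card hk hn G
      omega
    refine ⟨⟨j.val, hjk⟩, ?_⟩
    unfold bU
    have : j.val % (BtU hn G).toList.length = j.val := Nat.mod_eq_of_lt j.2
    simp only [this]
    convert hj
  · rintro ⟨i, rfl⟩
    rw [← Finset.mem_toList]
    apply List.get_mem

noncomputable def SU (hn : 0 < n) (G : TU n k) : Set (Fin n) := (↑(BtU hn G))ᶜ

noncomputable def fU (hn : 0 < n) (G : TU n k) : Fin n → Fin n := fun v =>
  if hv : v ∈ SU hn G then (pm (G.1.induce (SU hn G)) ⟨v, hv⟩).val else v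

lemma SU_acyclic (hn : 0 < n) (G : TU n k) : (G.1.induce (SU hn G)).IsAcyclic :=
  BtU_blocker hn G

lemma critU (hn : 0 < n) (G : TU n k) {u v : Fin n} (hne : u ≠ v)
    (hu : u ∈ SU hn G) (hv : v ∈ SU hn G) :
    G.1.Adj u v ↔ (fU hn G u = v ∨ fU hn G v = u) := by
  have hacy := SU_acyclic hn G
  have hne' : (⟨u, hu⟩ : ↥(SU hn G)) ≠ ⟨v, hv⟩ := by
    simp only [ne_eq, Subtype.mk.injEq]
    exact hne
  have h1 := pm_iff (G.1.induce (SU hn G)) hacy hne'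
  have h2 : (G.1.induce (SU hn G)).Adj ⟨u, hu⟩ ⟨v, hv⟩ ↔ G.1.Adj u v := comap_adj
  unfold fU
  rw [dif_pos hu, dif_pos hv, ← h2, h1]
  constructor
  · rintro (h | h)
    · left; rw [h]
    · right; rw [h]
  · rintro (h | h)
    · left; exact Subtype.ext h
    · right; exact Subtype.ext h

lemma count_upper (k n : ℕ) (hk : 1 ≤ k) (hn1 : 1 ≤ n) :
    apexCount n k ≤ n^k * 2^(k*n) * n^n := by
  have hn : 0 < n := hn1
  have hinj : Function.Injective (fun G : TU n k =>
      (bU hn G, fun (i : Fin k) (v : Fin n) => decide (G.1.Adj (bU hn G i) v), fU hn G)) := by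
    intro G G' h
    rw [Prod.mk.injEq, Prod.mk.injEq] at h
    obtain ⟨hb, hA, hf⟩ := h
    have hBeq : BtU hn G = BtU hn G' := by
      apply Finset.ext
      intro x
      rw [bU_mem hk hn G x, bU_mem hk hn G' x, hb]
    have hSeq : SU hn G = SU hn G' := by unfold SU; rw [hBeq]
    apply Subtype.ext
    ext u v
    by_cases huv : u = v
    · subst huv; simp
    by_cases hu : u ∈ BtU hn G
    · obtain ⟨i, hi⟩ := (bU_mem hk hn G u).mp hu
      have e1 : G.1.Adj u v ↔ (decide (G.1.Adj (bU hn G i) v) = true) := by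
        rw [decide_eq_true_iff, hi]
      have e2 : G'.1.Adj u v ↔ (decide (G'.1.Adj (bU hn G' i) v) = true) := by
        rw [decide_eq_true_iff, ← hb, hi]
      rw [e1, e2]
      have := congrFun (congrFun hA i) v
      rw [this]
    · by_cases hv : v ∈ BtU hn G
      · obtain ⟨i, hi⟩ := (bU_mem hk hn G v).mp hv
        have e1 : G.1.Adj u v ↔ (decide (G.1.Adj (bU hn G i) u) = true) := by
          rw [decide_eq_true_iff, hi, adj_comm]
        have e2 : G'.1.Adj u v ↔ (decide (G'.1.Adj (bU hn G' i) u) = true) := by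
          rw [decide_eq_true_iff, ← hb, hi, adj_comm]
        rw [e1, e2]
        have := congrFun (congrFun hA i) u
        rw [this]
      · have hu' : u ∈ SU hn G := by
          unfold SU; simpa using hu
        have hv' : v ∈ SU hn G := by
          unfold SU; simpa using hv
        rw [critU hn G huv hu' hv', critU hn G' huv (hSeq ▸ hu') (hSeq ▸ hv'), hf]
  have hle := Nat.card_le_card_of_injective _ hinj
  calc apexCount n k = Nat.card (TU n k) := rfl
    _ ≤ Nat.card ((Fin k → Fin n) × (Fin k → Fin n → Bool) × (Fin n → Fin n)) := hle
    _ = n^k * 2^(k*n) * n^n := by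
        rw [Nat.card_eq_fintype_card]
        rw [Fintype.card_prod, Fintype.card_prod, Fintype.card_fun, Fintype.card_fun,
          Fintype.card_fun, Fintype.card_fun, Fintype.card_fin, Fintype.card_fin,
          Fintype.card_bool]
        ring

end Upper

def Hn (k s n : ℕ) : ℕ := (n - k - 1)/s
def Nn (k s n : ℕ) : ℕ := s * Hn k s n

section LowerDefs

variable (n k s : ℕ)

abbrev PD := Equiv.Perm (Fin (Nn k s n)) × (Fin (Nn k s n) → Fin s) × (Fin k → Fin (n - k) → Bool)

lemma Nn_le' : Nn k s n ≤ n - k - 1 := by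
  unfold Nn Hn
  calc s * ((n-k-1)/s) = ((n-k-1)/s) * s := by ring
    _ ≤ n - k - 1 := Nat.div_mul_le_self _ _

lemma fin_Nn_facts (j : Fin (Nn k s n)) : j.val + 1 ≤ n - k - 1 ∧ k + 2 ≤ n ∧ 1 ≤ Hn k s n := by
  have h1 := Nn_le' n k s
  have h2 := j.2
  have h3 : 1 ≤ Hn k s n := by
    rcases Nat.eq_zero_or_pos (Hn k s n) with h | h
    · exfalso
      have hzero : Nn k s n = 0 := by unfold Nn; rw [h]; ring
      omega
    · exact h
  omega

def embL (j : Fin (Nn k s n)) : Fin n :=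
  ⟨j.val + 1, by have := fin_Nn_facts n k s j; omega⟩

lemma embL_val (j : Fin (Nn k s n)) : (embL n k s j).val = j.val + 1 := rfl

lemma embL_inj : Function.Injective (embL n k s) := by
  intro a b h
  have : a.val + 1 = b.val + 1 := congrArg Fin.val h
  exact Fin.ext (by omega)

def blkL (j : Fin (Nn k s n)) : ℕ := j.val / s

lemma blkL_lt (j : Fin (Nn k s n)) : blkL n k s j < Hn k s n := by
  unfold blkL
  have h2 := j.2
  have hs : 0 < s := by
    rcases Nat.eq_zero_or_pos s with h | h
    · exfalso
      have : Nn k s n = 0 := by unfold Nn; rw [h]; ring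
      omega
    · exact h
  rw [Nat.div_lt_iff_lt_mul hs]
  calc j.val < Nn k s n := h2
    _ = Hn k s n * s := by unfold Nn; ring

def pidxL (d : PD n k s) (j : Fin (Nn k s n)) : Fin (Nn k s n) :=
  ⟨(blkL n k s j - 1) * s + (d.2.1 j).val, by
    have hq := (d.2.1 j).2
    have hb := blkL_lt n k s j
    have h2 := j.2
    have hs : 0 < s := by omega
    have : (blkL n k s j - 1) * s + s ≤ Hn k s n * s := by
      have : blkL n k s j - 1 + 1 ≤ Hn k s n := by omega
      calc (blkL n k s j - 1) * s + s = (blkL n k s j - 1 + 1) * s := by ring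
        _ ≤ Hn k s n * s := Nat.mul_le_mul_right s this
    have hNn : Nn k s n = Hn k s n * s := by unfold Nn; ring
    omega⟩

lemma pidxL_val (d : PD n k s) (j : Fin (Nn k s n)) :
    (pidxL n k s d j).val = (blkL n k s j - 1) * s + (d.2.1 j).val := rfl

lemma blkL_pidx (d : PD n k s) (j : Fin (Nn k s n)) :
    blkL n k s (pidxL n k s d j) = blkL n k s j - 1 := by
  unfold blkL
  rw [pidxL_val]
  have hq := (d.2.1 j).2
  have hs : 0 < s := by omega
  rw [mul_comm, Nat.mul_add_div hs, Nat.div_eq_of_lt hq, add_zero]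
  rfl

def parentL (d : PD n k s) (j : Fin (Nn k s n)) : Fin n :=
  if j.val < s then ⟨0, by have := fin_Nn_facts n k s j; omega⟩
  else embL n k s (d.1 (pidxL n k s d j))

def vtxL (d : PD n k s) (j : Fin (Nn k s n)) : Fin n := embL n k s (d.1 j)

def LvL (d : PD n k s) (v : Fin n) : ℕ :=
  if h : 1 ≤ v.val ∧ v.val ≤ Nn k s n then
    blkL n k s (d.1.symm ⟨v.val - 1, by omega⟩) + 1 else 0

def PaL (d : PD n k s) (v : Fin n) : Fin n :=
  if h : 1 ≤ v.val ∧ v.val ≤ Nn k s n then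
    parentL n k s d (d.1.symm ⟨v.val - 1, by omega⟩) else v

def RfL (d : PD n k s) (u v : Fin n) : Prop :=
  (1 ≤ v.val ∧ v.val ≤ Nn k s n) ∧ u = PaL n k s d v

def RaL (d : PD n k s) (u v : Fin n) : Prop :=
  ∃ (i : Fin k) (w : Fin (n-k)), d.2.2 i w = true ∧ u.val = (n-k) + i.val ∧ v.val = w.val

def FL (d : PD n k s) : SimpleGraph (Fin n) := SimpleGraph.fromRel (RfL n k s d)

def PhiL (d : PD n k s) : SimpleGraph (Fin n) :=
  SimpleGraph.fromRel (fun u v => RfL n k s d u v ∨ RaL n k s d u v)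

end LowerDefs

section LowerLemmas

variable (n k s : ℕ)

lemma LvL_vtx (d : PD n k s) (j : Fin (Nn k s n)) :
    LvL n k s d (vtxL n k s d j) = blkL n k s j + 1 := by
  unfold LvL vtxL
  have hval : (embL n k s (d.1 j)).val = (d.1 j).val + 1 := rfl
  rw [dif_pos (by rw [hval]; exact ⟨by omega, by have := (d.1 j).2; omega⟩)]
  congr 1
  have : (⟨(embL n k s (d.1 j)).val - 1, by have := (d.1 j).2; simp [hval]⟩ : Fin (Nn k s n))
      = d.1 j := by
    apply Fin.ext
    simp [hval]
  rw [show ((⟨(embL n k s (d.1 j)).val - 1, _⟩ : Fin (Nn k s n))) = d.1 j from this,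
    Equiv.symm_apply_apply]

lemma PaL_vtx (d : PD n k s) (j : Fin (Nn k s n)) :
    PaL n k s d (vtxL n k s d j) = parentL n k s d j := by
  unfold PaL vtxL
  have hval : (embL n k s (d.1 j)).val = (d.1 j).val + 1 := rfl
  rw [dif_pos (by rw [hval]; exact ⟨by omega, by have := (d.1 j).2; omega⟩)]
  congr 1
  have : (⟨(embL n k s (d.1 j)).val - 1, by have := (d.1 j).2; simp [hval]⟩ : Fin (Nn k s n))
      = d.1 j := by
    apply Fin.ext
    simp [hval]
  rw [show ((⟨(embL n k s (d.1 j)).val - 1, _⟩ : Fin (Nn k s n))) = d.1 j from this,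
    Equiv.symm_apply_apply]

lemma LvL_parentL (d : PD n k s) (j : Fin (Nn k s n)) :
    LvL n k s d (parentL n k s d j) = blkL n k s j := by
  unfold parentL
  split
  · next h =>
    have : blkL n k s j = 0 := Nat.div_eq_of_lt h
    rw [this]
    unfold LvL
    rw [dif_neg (by simp)]
  · next h =>
    have h1 : LvL n k s d (vtxL n k s d (pidxL n k s d j)) = blkL n k s (pidxL n k s d j) + 1 :=
      LvL_vtx n k s d _
    unfold vtxL at h1
    rw [h1, blkL_pidx]
    have : 1 ≤ blkL n k s j := by
      unfold blkL
      have hs : 0 < s := by have := (d.2.1 j).2; omega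
      rw [Nat.le_div_iff_mul_le hs]
      omega
    omega

lemma LvL_eq_iff (d : PD n k s) (v : Fin n) (h : 1 ≤ v.val ∧ v.val ≤ Nn k s n) :
    LvL n k s d v = blkL n k s (d.1.symm ⟨v.val - 1, by omega⟩) + 1 := by
  unfold LvL
  rw [dif_pos h]

lemma LvL_pos_cond (d : PD n k s) (v : Fin n) (h : 1 ≤ LvL n k s d v) :
    1 ≤ v.val ∧ v.val ≤ Nn k s n := by
  by_contra hc
  unfold LvL at h
  rw [dif_neg hc] at h
  omega

/-- classification of edges of FL -/
lemma FL_class (d : PD n k s) : ∀ u v, (FL n k s d).Adj u v →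
    (u = PaL n k s d v ∧ LvL n k s d u + 1 = LvL n k s d v) ∨
    (v = PaL n k s d u ∧ LvL n k s d v + 1 = LvL n k s d u) := by
  have main : ∀ u v, RfL n k s d u v →
      (u = PaL n k s d v ∧ LvL n k s d u + 1 = LvL n k s d v) := by
    intro u v hr
    obtain ⟨hcond, hpa⟩ := hr
    refine ⟨hpa, ?_⟩
    set j := d.1.symm ⟨v.val - 1, by omega⟩ with hj
    have hPa : PaL n k s d v = parentL n k s d j := by
      unfold PaL; rw [dif_pos hcond]
    have hLv : LvL n k s d v = blkL n k s j + 1 := by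
      unfold LvL; rw [dif_pos hcond]
    rw [hpa, hPa, LvL_parentL, hLv]
  intro u v hadj
  rw [FL, fromRel_adj] at hadj
  rcases hadj.2 with h | h
  · left; exact main u v h
  · right; exact main v u h

lemma RfL_small (d : PD n k s) {u v : Fin n} (h : RfL n k s d u v) :
    u.val < n - k ∧ v.val < n - k := by
  obtain ⟨hcond, hpa⟩ := h
  have hNn : Nn k s n ≤ n - k - 1 := Nn_le' n k s
  have hN1 : 1 ≤ Nn k s n := by omega
  constructor
  · rw [hpa]
    unfold PaL
    rw [dif_pos hcond]
    unfold parentL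
    split
    · simp; omega
    · rw [embL_val]
      have := (d.1 (pidxL n k s d (d.1.symm ⟨v.val - 1, by omega⟩))).2
      omega
  · omega

lemma PhiL_small (d : PD n k s) {u v : Fin n} (hu : u.val < n - k) (hv : v.val < n-k) :
    (PhiL n k s d).Adj u v ↔ (FL n k s d).Adj u v := by
  rw [PhiL, FL, fromRel_adj, fromRel_adj]
  have hna : ¬ RaL n k s d u v := by
    rintro ⟨i, w, _, hu', _⟩
    omega
  have hna' : ¬ RaL n k s d v u := by
    rintro ⟨i, w, _, hv', _⟩
    omega
  tauto

lemma PhiL_apex (d : PD n k s) {u v : Fin n} (hu : n - k ≤ u.val) (hv : v.val < n - k) :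
    (PhiL n k s d).Adj u v ↔ RaL n k s d u v := by
  rw [PhiL, fromRel_adj]
  constructor
  · rintro ⟨hne, (h | h) | (h | h)⟩
    · exact absurd ((RfL_small n k s d h).1) (by omega)
    · exact h
    · exact absurd ((RfL_small n k s d h).2) (by omega)
    · obtain ⟨i, w, _, hv', _⟩ := h
      omega
  · intro h
    have h2 := h
    obtain ⟨i, w, _, hu', hv'⟩ := h2
    refine ⟨?_, Or.inl (Or.inr h)⟩
    intro he
    rw [he] at hu'
    omega

end LowerLemmas


section LowerBlocker

variable (n k s : ℕ)

lemma isAcyclic_induce_of {V : Type*} {G : SimpleGraph V} (h : G.IsAcyclic) (S : Set V) :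
    (G.induce S).IsAcyclic := by
  have huniv : (G.induce Set.univ).IsAcyclic :=
    isAcyclic_of_embedding (G.induceUnivIso).toEmbedding h
  exact isAcyclic_induce_mono (Set.subset_univ S) huniv

lemma FL_acyclic (d : PD n k s) : (FL n k s d).IsAcyclic :=
  isAcyclic_of_parent (LvL n k s d) (PaL n k s d) (fun u v hadj => FL_class n k s d u v hadj)

def BLo (n k : ℕ) : Finset (Fin n) := Finset.univ.filter (fun v => n - k ≤ v.val)

lemma BLo_card (hkn : k ≤ n) : (BLo n k).card = k := by
  have himg : BLo n k = Finset.image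
      (fun i : Fin k => (⟨n - k + i.val, by have := i.2; omega⟩ : Fin n)) Finset.univ := by
    apply Finset.ext
    intro v
    simp only [BLo, Finset.mem_filter, Finset.mem_univ, true_and, Finset.mem_image]
    constructor
    · intro hv
      have hv2 := v.2
      refine ⟨⟨v.val - (n - k), by omega⟩, ?_⟩
      apply Fin.ext
      simp
      omega
    · rintro ⟨i, rfl⟩
      simp
  rw [himg, Finset.card_image_of_injective _ (fun a b hab => by
    have : n - k + a.val = n - k + b.val := congrArg Fin.val hab
    exact Fin.ext (by omega))]
  simp

lemma BLo_compl : ((BLo n k : Finset (Fin n)) : Set (Fin n))ᶜ = {v : Fin n | v.val < n - k} := by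
  ext v
  simp [BLo]
  omega

lemma PhiL_blocker (d : PD n k s) : IsBlocker (PhiL n k s d) ↑(BLo n k) := by
  unfold IsBlocker
  have heq : (PhiL n k s d).induce (↑(BLo n k))ᶜ = (FL n k s d).induce (↑(BLo n k))ᶜ := by
    ext ⟨u, hu⟩ ⟨v, hv⟩
    rw [BLo_compl] at hu hv
    simp only [comap_adj, Function.Embedding.coe_subtype]
    exact PhiL_small n k s d hu hv
  rw [heq]
  exact isAcyclic_induce_of (FL_acyclic n k s d) _

end LowerBlocker

section LowerW

variable (n k s : ℕ)

def WLv (d : PD n k s) : ℕ → Set (Fin n)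
  | 0 => {v | v.val = 0}
  | (b+1) => {v | LvL n k s d v = b + 1}

lemma WLv_Lv (d : PD n k s) {b : ℕ} {v : Fin n} (h : v ∈ WLv n k s d b) :
    LvL n k s d v = b := by
  cases b with
  | zero =>
    have hv : v.val = 0 := h
    unfold LvL
    rw [dif_neg (by omega)]
  | succ b => exact h

lemma parent_adj (d : PD n k s) (j : Fin (Nn k s n)) :
    (PhiL n k s d).Adj (parentL n k s d j) (vtxL n k s d j) := by
  rw [PhiL, fromRel_adj]
  constructor
  · intro heq
    have h1 : LvL n k s d (parentL n k s d j) = blkL n k s j := LvL_parentL n k s d j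
    have h2 : LvL n k s d (vtxL n k s d j) = blkL n k s j + 1 := LvL_vtx n k s d j
    rw [heq, h2] at h1
    omega
  · left; left
    refine ⟨?_, ?_⟩
    · constructor
      · rw [vtxL, embL_val]; omega
      · rw [vtxL, embL_val]; have := (d.1 j).2; omega
    · exact (PaL_vtx n k s d j).symm

lemma vtx_of_cond (d : PD n k s) {v : Fin n} (h : 1 ≤ v.val ∧ v.val ≤ Nn k s n) :
    v = vtxL n k s d (d.1.symm ⟨v.val - 1, by omega⟩) := by
  unfold vtxL
  apply Fin.ext
  rw [embL_val, Equiv.apply_symm_apply]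
  simp
  omega

lemma WLv_rec (d : PD n k s) (b : ℕ) :
    WLv n k s d (b+1) = {v : Fin n | v.val < n - k ∧
      (∃ u ∈ WLv n k s d b, (PhiL n k s d).Adj u v) ∧
      v ∉ (if b = 0 then (∅ : Set (Fin n)) else WLv n k s d (b-1))} := by
  have hNn := Nn_le' n k s
  ext v
  constructor
  · intro hv
    have hLv : LvL n k s d v = b + 1 := hv
    have hcond : 1 ≤ v.val ∧ v.val ≤ Nn k s n := LvL_pos_cond n k s d v (by omega)
    set j := d.1.symm ⟨v.val - 1, by omega⟩ with hj
    have hvj : v = vtxL n k s d j := vtx_of_cond n k s d hcond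
    have hblk : blkL n k s j = b := by
      have := LvL_eq_iff n k s d v hcond
      rw [← hj] at this
      omega
    refine ⟨by omega, ⟨parentL n k s d j, ?_, by rw [hvj]; exact parent_adj n k s d j⟩, ?_⟩
    · have hLp : LvL n k s d (parentL n k s d j) = b := by
        rw [LvL_parentL, hblk]
      cases b with
      | zero =>
        -- parent is the root
        have hjs : j.val < s := by
          have hs : 0 < s := by have := (d.2.1 j).2; omega
          by_contra hge
          have h1 : 1 ≤ j.val / s := (Nat.one_le_div_iff hs).mpr (by omega)
          have hb0 : blkL n k s j = j.val / s := rfl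
          omega
        unfold parentL
        rw [if_pos hjs]
        rfl
      | succ b' => exact hLp
    · cases b with
      | zero => simp
      | succ b' =>
        simp only [if_neg (Nat.succ_ne_zero b')]
        cases b' with
        | zero =>
          intro hmem
          have : v.val = 0 := hmem
          omega
        | succ b'' =>
          intro hmem
          have : LvL n k s d v = b'' + 1 := hmem
          omega
  · rintro ⟨hvsmall, ⟨u, hu, hadj⟩, hnot⟩
    have hLu : LvL n k s d u = b := WLv_Lv n k s d hu
    have husmall : u.val < n - k := by
      cases b with
      | zero =>
        have : u.val = 0 := hu
        omega
      | succ b' =>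
        have hcond := LvL_pos_cond n k s d u (by omega)
        omega
    have hF := (PhiL_small n k s d husmall hvsmall).mp hadj
    rcases FL_class n k s d u v hF with ⟨_, hL⟩ | ⟨hPa, hL⟩
    · show LvL n k s d v = b + 1
      omega
    · exfalso
      -- v = PaL u with LvL v + 1 = LvL u = b
      have hb1 : 1 ≤ b := by omega
      have hLv : LvL n k s d v = b - 1 := by omega
      rw [if_neg (by omega)] at hnot
      cases hb : b - 1 with
      | zero =>
        -- v must be the root, so in WLv 0
        apply hnot
        rw [hb]
        show v.val = 0
        -- v = PaL u; analyze
        have hcondu : 1 ≤ u.val ∧ u.val ≤ Nn k s n := LvL_pos_cond n k s d u (by omega)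
        set ju := d.1.symm ⟨u.val - 1, by omega⟩ with hju
        have : PaL n k s d u = parentL n k s d ju := by
          unfold PaL; rw [dif_pos hcondu]
        rw [this] at hPa
        unfold parentL at hPa
        split at hPa
        · rw [hPa]
        · exfalso
          rw [hPa] at hLv
          have := LvL_vtx n k s d (pidxL n k s d ju)
          unfold vtxL at this
          rw [this] at hLv
          omega
      | succ c =>
        apply hnot
        rw [hb]
        show LvL n k s d v = c + 1
        omega

lemma WLv_graph_eq (d d' : PD n k s) (hG : PhiL n k s d = PhiL n k s d') :
    ∀ b, WLv n k s d b = WLv n k s d' b := by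
  intro b
  induction b using Nat.strong_induction_on with
  | _ b ih =>
    cases b with
    | zero => rfl
    | succ b' =>
      rw [WLv_rec, WLv_rec, hG]
      have h1 : WLv n k s d b' = WLv n k s d' b' := ih b' (by omega)
      rw [h1]
      cases b' with
      | zero => rfl
      | succ b'' =>
        have h2 : WLv n k s d b'' = WLv n k s d' b'' := ih b'' (by omega)
        simp only [if_neg (Nat.succ_ne_zero b'')]
        rw [Nat.succ_sub_one, h2]

end LowerW

section LowerFinal

variable (n k s : ℕ)

lemma s_le_Nn (hn : k + s + 2 ≤ n) (hs : 1 ≤ s) : s ≤ Nn k s n := by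
  have h1 : 1 ≤ Hn k s n := by
    unfold Hn
    have : s ≤ n - k - 1 := by omega
    exact (Nat.one_le_div_iff (by omega)).mpr this
  calc s = s * 1 := by ring
    _ ≤ s * Hn k s n := Nat.mul_le_mul_left s h1
    _ = Nn k s n := rfl

def idxL (hn : k + s + 2 ≤ n) (hs : 1 ≤ s) (b : Fin (Hn k s n)) (i : Fin s) :
    Fin (Nn k s n) :=
  ⟨b.val * s + i.val, by
    have hb := b.2
    have hi := i.2
    have h2 : (b.val + 1) * s ≤ Hn k s n * s := Nat.mul_le_mul_right s (by omega)
    have hNn : Nn k s n = Hn k s n * s := by unfold Nn; ring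
    nlinarith⟩

lemma blk_idxL (hn : k + s + 2 ≤ n) (hs : 1 ≤ s) (b : Fin (Hn k s n)) (i : Fin s) :
    blkL n k s (idxL n k s hn hs b i) = b.val := by
  show (b.val * s + i.val) / s = b.val
  rw [mul_comm, Nat.mul_add_div (by omega), Nat.div_eq_of_lt i.2, add_zero]

lemma vtxL_inj (d : PD n k s) : Function.Injective (vtxL n k s d) := by
  intro a b h
  exact d.1.injective (embL_inj n k s h)

def blockF (d : PD n k s) (hn : k + s + 2 ≤ n) (hs : 1 ≤ s) (b : Fin (Hn k s n)) :
    Finset (Fin n) :=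
  Finset.image (fun i : Fin s => vtxL n k s d (idxL n k s hn hs b i)) Finset.univ

lemma blockF_card (d : PD n k s) (hn : k + s + 2 ≤ n) (hs : 1 ≤ s) (b : Fin (Hn k s n)) :
    (blockF n k s d hn hs b).card = s := by
  rw [blockF, Finset.card_image_of_injective _ (fun a a' haa => by
    have h2 := vtxL_inj n k s d haa
    have h3 : b.val * s + a.val = b.val * s + a'.val := congrArg Fin.val h2
    exact Fin.ext (by omega)), Finset.card_univ, Fintype.card_fin]

lemma blockF_coe (d : PD n k s) (hn : k + s + 2 ≤ n) (hs : 1 ≤ s) (b : Fin (Hn k s n)) :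
    (↑(blockF n k s d hn hs b) : Set (Fin n)) = WLv n k s d (b.val + 1) := by
  ext v
  simp only [blockF, Finset.coe_image, Set.mem_image, Finset.coe_univ, Set.image_univ,
    Set.mem_range]
  constructor
  · rintro ⟨i, rfl⟩
    show LvL n k s d _ = b.val + 1
    rw [LvL_vtx, blk_idxL]
  · intro hv
    have hLv : LvL n k s d v = b.val + 1 := hv
    have hcond : 1 ≤ v.val ∧ v.val ≤ Nn k s n := LvL_pos_cond n k s d v (by omega)
    set j := d.1.symm ⟨v.val - 1, by omega⟩ with hj
    have hblk : blkL n k s j = b.val := by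
      have := LvL_eq_iff n k s d v hcond
      rw [← hj] at this
      omega
    have hs0 : 0 < s := by omega
    refine ⟨⟨j.val % s, Nat.mod_lt _ hs0⟩, ?_⟩
    have hidx : idxL n k s hn hs b ⟨j.val % s, Nat.mod_lt _ hs0⟩ = j := by
      apply Fin.ext
      show b.val * s + j.val % s = j.val
      have hdiv : j.val / s = b.val := hblk
      rw [← hdiv]
      exact Nat.div_add_mod' j.val s
    rw [hidx]
    exact (vtx_of_cond n k s d hcond).symm

lemma orderIso_helper {F F' : Finset (Fin n)} (hFF : F = F') {hF : F.card = s}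
    {hF' : F'.card = s} {x y : Fin n} {hx : x ∈ F} {hy : y ∈ F'}
    (h : (Finset.orderIsoOfFin F hF).symm ⟨x, hx⟩ = (Finset.orderIsoOfFin F' hF').symm ⟨y, hy⟩) :
    x = y := by
  subst hFF
  have h2 := congrArg (Finset.orderIsoOfFin F hF) h
  rw [OrderIso.apply_symm_apply] at h2
  have h3 : (Finset.orderIsoOfFin F hF') = (Finset.orderIsoOfFin F hF) := rfl
  rw [h3, OrderIso.apply_symm_apply] at h2
  exact congrArg Subtype.val h2

noncomputable def res1 (d : PD n k s) (hn : k + s + 2 ≤ n) (hs : 1 ≤ s) :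
    Fin (Hn k s n) → (Fin s ↪ Fin s) := fun b =>
  ⟨fun i => (Finset.orderIsoOfFin (blockF n k s d hn hs b) (blockF_card n k s d hn hs b)).symm
      ⟨vtxL n k s d (idxL n k s hn hs b i),
        Finset.mem_image_of_mem _ (Finset.mem_univ i)⟩,
   by
    intro i i' hii
    have h1 := congrArg (Finset.orderIsoOfFin (blockF n k s d hn hs b)
      (blockF_card n k s d hn hs b)) hii
    rw [OrderIso.apply_symm_apply, OrderIso.apply_symm_apply] at h1
    have h2 := congrArg Subtype.val h1
    have h3 := vtxL_inj n k s d h2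
    have h4 : b.val * s + i.val = b.val * s + i'.val := congrArg Fin.val h3
    exact Fin.ext (by omega)⟩

def res2 (d : PD n k s) (hn : k + s + 2 ≤ n) (hs : 1 ≤ s) : Fin s → Fin s := fun i =>
  d.2.1 ⟨i.val, lt_of_lt_of_le i.2 (s_le_Nn n k s hn hs)⟩

lemma A_recover (hn : k + s + 2 ≤ n) (d : PD n k s) (i : Fin k) (w : Fin (n-k)) :
    d.2.2 i w = true ↔ (PhiL n k s d).Adj
      ⟨n - k + i.val, by have := i.2; omega⟩ ⟨w.val, by have := w.2; omega⟩ := by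
  rw [PhiL_apex n k s d (by simp) (by simp [w.2])]
  constructor
  · intro h
    exact ⟨i, w, h, rfl, rfl⟩
  · rintro ⟨i', w', h', hu', hv'⟩
    simp only at hu' hv'
    have hi : i' = i := Fin.ext (by omega)
    have hw : w' = w := Fin.ext (by omega)
    rw [hi, hw] at h'
    exact h'

end LowerFinal

lemma count_lower (k s n : ℕ) (hk : 1 ≤ k) (hs : 1 ≤ s) (hn : k + s + 2 ≤ n) :
    (Nn k s n).factorial * s^(Nn k s n) * 2^((n-k)*k)
      ≤ apexCount n k * (s.factorial^(Hn k s n) * s^s) := by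
  classical
  have hmem : ∀ d : PD n k s, ∃ B : Finset (Fin n), B.card ≤ k ∧ IsBlocker (PhiL n k s d) ↑B :=
    fun d => ⟨BLo n k, le_of_eq (BLo_card n k (by omega)), PhiL_blocker n k s d⟩
  have hinj : Function.Injective (fun d : PD n k s =>
      ((⟨PhiL n k s d, hmem d⟩ : {G : SimpleGraph (Fin n) // ∃ B : Finset (Fin n),
          B.card ≤ k ∧ IsBlocker G ↑B}),
        res1 n k s d hn hs, res2 n k s d hn hs)) := by
    intro d d' h
    simp only [Prod.mk.injEq, Subtype.mk.injEq] at h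
    obtain ⟨hG, h2, h3⟩ := h
    have hW := WLv_graph_eq n k s d d' hG
    have hBF : ∀ b, blockF n k s d hn hs b = blockF n k s d' hn hs b := fun b =>
      Finset.coe_injective (by rw [blockF_coe, blockF_coe, hW])
    have hs0 : 0 < s := by omega
    have hvtx : ∀ j : Fin (Nn k s n), vtxL n k s d j = vtxL n k s d' j := by
      intro j
      set b : Fin (Hn k s n) := ⟨blkL n k s j, blkL_lt n k s j⟩ with hb
      set i : Fin s := ⟨j.val % s, Nat.mod_lt _ hs0⟩ with hi
      have hidx : idxL n k s hn hs b i = j := by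
        apply Fin.ext
        show blkL n k s j * s + j.val % s = j.val
        have hdiv : j.val / s = blkL n k s j := rfl
        rw [← hdiv]
        exact Nat.div_add_mod' j.val s
      have hr := congrFun h2 b
      have hr2 := congrArg (fun (e : Fin s ↪ Fin s) => e i) hr
      simp only [res1, Function.Embedding.coeFn_mk] at hr2
      have hres := orderIso_helper n s (hBF b) (hF := blockF_card n k s d hn hs b)
        (hF' := blockF_card n k s d' hn hs b) hr2
      rwa [hidx] at hres
    have hσ : d.1 = d'.1 := by
      apply Equiv.ext
      intro j
      exact embL_inj n k s (hvtx j)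
    have hq : d.2.1 = d'.2.1 := by
      funext j
      by_cases hjs : j.val < s
      · have hthis := congrFun h3 ⟨j.val, hjs⟩
        simp only [res2] at hthis
        have hj1 : (⟨(⟨j.val, hjs⟩ : Fin s).val,
            lt_of_lt_of_le (⟨j.val, hjs⟩ : Fin s).2 (s_le_Nn n k s hn hs)⟩ : Fin (Nn k s n))
            = j := Fin.ext rfl
        rwa [hj1] at hthis
      · have hblkj : 1 ≤ blkL n k s j := (Nat.one_le_div_iff hs0).mpr (by omega)
        have hpar' : parentL n k s d' j = vtxL n k s d' (pidxL n k s d' j) := by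
          unfold parentL
          rw [if_neg hjs]
          rfl
        have hadj' := parent_adj n k s d' j
        rw [← hG, hpar', ← hvtx, ← hvtx] at hadj'
        -- hadj' : (PhiL d).Adj (vtxL d (pidxL d' j)) (vtxL d j)
        have hNn := Nn_le' n k s
        have hsmall : ∀ jj : Fin (Nn k s n), (vtxL n k s d jj).val < n - k := by
          intro jj
          rw [vtxL, embL_val]
          have := (d.1 jj).2
          omega
        have hF := (PhiL_small n k s d (hsmall _) (hsmall _)).mp hadj'
        have hLpidx' : LvL n k s d (vtxL n k s d (pidxL n k s d' j)) = blkL n k s j := by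
          rw [LvL_vtx, blkL_pidx]
          omega
        have hLj : LvL n k s d (vtxL n k s d j) = blkL n k s j + 1 := LvL_vtx n k s d j
        rcases FL_class n k s d _ _ hF with ⟨hPa, _⟩ | ⟨_, hL⟩
        · have hPaval : PaL n k s d (vtxL n k s d j) = vtxL n k s d (pidxL n k s d j) := by
            rw [PaL_vtx]
            unfold parentL
            rw [if_neg hjs]
            rfl
          rw [hPaval] at hPa
          have hpe := vtxL_inj n k s d hPa
          have hval : (blkL n k s j - 1) * s + (d'.2.1 j).val
              = (blkL n k s j - 1) * s + (d.2.1 j).val := congrArg Fin.val hpe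
          exact Fin.ext (by omega)
        · rw [hLpidx', hLj] at hL
          omega
    have hA : d.2.2 = d'.2.2 := by
      funext i w
      have hA1 := A_recover n k s hn d i w
      have hA2 := A_recover n k s hn d' i w
      rw [hG] at hA1
      exact Bool.eq_iff_iff.mpr (hA1.trans hA2.symm)
    rcases d with ⟨σ, q, A⟩
    rcases d' with ⟨σ', q', A'⟩
    simp only [Prod.mk.injEq]
    exact ⟨hσ, hq, hA⟩
  have hcard := Nat.card_le_card_of_injective _ hinj
  have hPD : Nat.card (PD n k s) = (Nn k s n).factorial * s^(Nn k s n) * 2^((n-k)*k) := by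
    rw [Nat.card_eq_fintype_card, Fintype.card_prod, Fintype.card_prod, Fintype.card_perm,
      Fintype.card_fun, Fintype.card_fun, Fintype.card_fun]
    simp only [Fintype.card_fin, Fintype.card_bool]
    rw [← pow_mul]
    ring
  have hTar : Nat.card ({G : SimpleGraph (Fin n) // ∃ B : Finset (Fin n),
        B.card ≤ k ∧ IsBlocker G ↑B} × (Fin (Hn k s n) → (Fin s ↪ Fin s)) × (Fin s → Fin s))
      = apexCount n k * (s.factorial^(Hn k s n) * s^s) := by
    rw [Nat.card_prod, Nat.card_prod]
    have e2 : Nat.card (Fin (Hn k s n) → (Fin s ↪ Fin s)) = s.factorial^(Hn k s n) := by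
      rw [Nat.card_eq_fintype_card, Fintype.card_fun, Fintype.card_embedding_eq]
      simp only [Fintype.card_fin]
      rw [Nat.descFactorial_self]
    have e3 : Nat.card (Fin s → Fin s) = s^s := by
      rw [Nat.card_eq_fintype_card, Fintype.card_fun]
      simp
    rw [e2, e3]
    rfl
  rw [hPD, hTar] at hcard
  exact hcard

section Analysis

variable (k s : ℕ)

lemma Nn_le (k s n : ℕ) (hs : 1 ≤ s) (hn : k + s + 2 ≤ n) :
    n - (k + s) ≤ Nn k s n ∧ Nn k s n ≤ n - k - 1 ∧ s * Hn k s n ≤ n := by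
  have h := Nat.div_add_mod (n - k - 1) s
  have h2 := Nat.mod_lt (n - k - 1) (show 0 < s by omega)
  unfold Nn Hn
  omega

lemma tendsto_Hn_div (hs : 1 ≤ s) :
    Tendsto (fun n : ℕ => ((Hn k s n : ℝ))/n) atTop (nhds (1/s)) := by
  have hs0 : (0:ℝ) < s := by exact_mod_cast hs
  apply tendsto_of_tendsto_of_tendsto_of_le_of_le'
    (g := fun n : ℕ => ((n:ℝ) - (k + s))/(s*n)) (h := fun n : ℕ => (n:ℝ)/(s*n))
  · -- lower bound tendsto
    have h1 : Tendsto (fun n : ℕ => ((k:ℝ)+s)/s * (1/n)) atTop (nhds 0) := by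
      have := tendsto_one_div_atTop_nhds_zero_nat.const_mul (((k:ℝ)+s)/s)
      simpa using this
    have h2 := (tendsto_const_nhds (x := (1/(s:ℝ)))).sub h1
    rw [sub_zero] at h2
    apply h2.congr'
    filter_upwards [eventually_gt_atTop 0] with n hn
    have hne : (n:ℝ) ≠ 0 := by positivity
    field_simp
  · -- upper bound tendsto
    have : ∀ᶠ n : ℕ in atTop, (n:ℝ)/(s*n) = 1/s := by
      filter_upwards [eventually_gt_atTop 0] with n hn
      have : (n:ℝ) ≠ 0 := by positivity
      field_simp
    exact Tendsto.congr' (by filter_upwards [this] with n h using h.symm) tendsto_const_nhds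
  · -- lower ineq
    filter_upwards [eventually_ge_atTop (k+s+2)] with n hn
    have hb := Nn_le k s n hs hn
    have h1 : (n - (k+s) : ℕ) ≤ s * Hn k s n := by have := hb.1; unfold Nn at this; omega
    have h2 : ((n - (k+s) : ℕ) : ℝ) = (n:ℝ) - (k+s) := by
      rw [Nat.cast_sub (by omega)]; push_cast; ring
    have h3 : (n:ℝ) - (k+s) ≤ s * Hn k s n := by
      rw [← h2]; exact_mod_cast h1
    have hn0 : (0:ℝ) < n := by exact_mod_cast (show 0 < n by omega)
    rw [div_le_div_iff₀ (by positivity) (by positivity)]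
    calc ((n:ℝ) - (k+s)) * n ≤ ((s:ℝ) * Hn k s n) * n := by
          apply mul_le_mul_of_nonneg_right h3 (by positivity)
      _ = (Hn k s n : ℝ) * (s * n) := by ring
  · -- upper ineq
    filter_upwards [eventually_ge_atTop (k+s+2)] with n hn
    have hb := Nn_le k s n hs hn
    have h1 : s * Hn k s n ≤ n := hb.2.2
    have h3 : (s:ℝ) * Hn k s n ≤ n := by exact_mod_cast h1
    have hn0 : (0:ℝ) < n := by exact_mod_cast (show 0 < n by omega)
    rw [div_le_div_iff₀ (by positivity) (by positivity)]
    calc (Hn k s n : ℝ) * (s * n) = ((s:ℝ) * Hn k s n) * n := by ring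
      _ ≤ (n:ℝ) * n := by apply mul_le_mul_of_nonneg_right h3 (by positivity)

lemma tendsto_Nn_div (hs : 1 ≤ s) :
    Tendsto (fun n : ℕ => ((Nn k s n : ℝ))/n) atTop (nhds 1) := by
  have h := (tendsto_Hn_div k s hs).const_mul (s:ℝ)
  have hs0 : (0:ℝ) < s := by exact_mod_cast hs
  have : (s:ℝ) * (1/s) = 1 := by field_simp
  rw [this] at h
  apply h.congr
  intro n
  unfold Nn
  push_cast
  ring

lemma tendsto_logfact_diff (hs : 1 ≤ s) :
    Tendsto (fun n : ℕ => (Real.log (Nn k s n).factorial - Real.log n.factorial)/n)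
      atTop (nhds 0) := by
  apply tendsto_of_tendsto_of_tendsto_of_le_of_le'
    (g := fun n : ℕ => -(((k:ℝ)+s) * (Real.log n / n))) (h := fun _ : ℕ => (0:ℝ))
  · have := (tendsto_log_nat_div.const_mul (((k:ℝ)+s))).neg
    simpa using this
  · exact tendsto_const_nhds
  · filter_upwards [eventually_ge_atTop (k+s+2)] with n hn
    -- log n! ≤ log N! + (k+s) log n
    have hb := Nn_le k s n hs hn
    have hN : Nn k s n ≤ n := by omega
    have h1 : n.factorial ≤ (Nn k s n).factorial * n^(n - Nn k s n) :=
      fact_le_fact_mul_pow n (Nn k s n) hN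
    have h2 : n - Nn k s n ≤ k + s := by omega
    have h3 : n.factorial ≤ (Nn k s n).factorial * n^(k+s) := by
      calc n.factorial ≤ (Nn k s n).factorial * n^(n - Nn k s n) := h1
        _ ≤ (Nn k s n).factorial * n^(k+s) :=
            Nat.mul_le_mul_left _ (Nat.pow_le_pow_right (by omega) h2)
    have h4 : Real.log n.factorial ≤ Real.log (Nn k s n).factorial + ((k:ℝ)+s) * Real.log n := by
      have hc : (n.factorial : ℝ) ≤ ((Nn k s n).factorial : ℝ) * (n:ℝ)^(k+s) := by
        exact_mod_cast h3
      have hn0 : (0:ℝ) < n := by exact_mod_cast (show 0 < n by omega)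
      have := Real.log_le_log (by positivity) hc
      rw [Real.log_mul (by positivity) (pow_ne_zero _ hn0.ne'), Real.log_pow] at this
      calc Real.log n.factorial ≤ Real.log (Nn k s n).factorial + (k+s:ℕ) * Real.log n := this
        _ = Real.log (Nn k s n).factorial + ((k:ℝ)+s) * Real.log n := by push_cast; ring
    have hn0 : (0:ℝ) < n := by exact_mod_cast (show 0 < n by omega)
    rw [neg_le, ← neg_div, neg_sub,
      show ((k:ℝ)+s) * (Real.log ↑n / ↑n) = (((k:ℝ)+s) * Real.log ↑n)/↑n from by ring,
      div_le_div_iff₀ hn0 hn0]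
    apply mul_le_mul_of_nonneg_right (by linarith) hn0.le
  · filter_upwards [eventually_ge_atTop (k+s+2)] with n hn
    have hb := Nn_le k s n hs hn
    have hN : Nn k s n ≤ n := by omega
    have h1 : (Nn k s n).factorial ≤ n.factorial := Nat.factorial_le hN
    have h2 : Real.log (Nn k s n).factorial ≤ Real.log n.factorial :=
      Real.log_le_log (by positivity) (by exact_mod_cast h1)
    apply div_nonpos_of_nonpos_of_nonneg (by linarith) (by positivity)

end Analysis

section Analysis2
variable (k s : ℕ)

lemma tendsto_nk_div (k : ℕ) :
    Tendsto (fun n : ℕ => (((n-k)*k : ℕ) : ℝ)/n) atTop (nhds k) := by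
  have h1 : Tendsto (fun n : ℕ => (k:ℝ) - (k:ℝ)*k*(1/n)) atTop (nhds k) := by
    have := (tendsto_one_div_atTop_nhds_zero_nat.const_mul ((k:ℝ)*k)).const_sub (k:ℝ)
    simpa using this
  apply h1.congr'
  filter_upwards [eventually_ge_atTop (k+1)] with n hn
  have hne : (n:ℝ) ≠ 0 := by
    have : (0:ℕ) < n := by omega
    positivity
  have hcast : (((n-k)*k : ℕ) : ℝ) = ((n:ℝ) - k)*k := by
    push_cast [Nat.cast_sub (show k ≤ n by omega)]; ring
  rw [hcast]
  field_simp

lemma tendsto_vlog (hk : 1 ≤ k) (hs : 1 ≤ s) :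
    Tendsto (fun n : ℕ =>
      (Real.log (Nn k s n).factorial + (Nn k s n : ℝ) * Real.log s
       + (((n-k)*k : ℕ) : ℝ) * Real.log 2 - (Hn k s n : ℝ) * Real.log s.factorial
       - (s:ℝ) * Real.log s - Real.log n.factorial) / n)
      atTop (nhds ((k:ℝ)*Real.log 2 + Real.log s - Real.log s.factorial / s)) := by
  have T1 := tendsto_logfact_diff k s hs
  have T2 := (tendsto_Nn_div k s hs).mul_const (Real.log s)
  have T3 := (tendsto_nk_div k).mul_const (Real.log 2)
  have T4 := (tendsto_Hn_div k s hs).mul_const (Real.log s.factorial)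
  have T5 : Tendsto (fun n : ℕ => ((s:ℝ) * Real.log s)/n) atTop (nhds 0) := by
    have := tendsto_one_div_atTop_nhds_zero_nat.const_mul ((s:ℝ) * Real.log s)
    rw [mul_zero] at this
    apply this.congr
    intro n
    rw [mul_one_div]
  have Tall := ((((T1.add T2).add T3).sub T4).sub T5)
  have hval : ((0:ℝ) + 1 * Real.log s + (k:ℝ) * Real.log 2 - 1/(s:ℝ) * Real.log s.factorial - 0)
      = (k:ℝ)*Real.log 2 + Real.log s - Real.log s.factorial / s := by ring
  rw [hval] at Tall
  apply Tall.congr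
  intro n
  ring

lemma level_log_ge (hs : 1 ≤ s) :
    (k:ℝ)*Real.log 2 + 1 - (1 + Real.log s)/s
      ≤ (k:ℝ)*Real.log 2 + Real.log s - Real.log s.factorial / s := by
  have hs0 : (0:ℝ) < s := by exact_mod_cast hs
  have hfa := factorial_le_aux s hs
  have hexp := Real.exp_pos 1
  have hlog : Real.log s.factorial ≤ 1 + Real.log s + (s:ℝ) * Real.log s - s := by
    have h1 : Real.log s.factorial ≤ Real.log (Real.exp 1 * s * ((s:ℝ)/Real.exp 1)^s) :=
      Real.log_le_log (by positivity) hfa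
    rw [Real.log_mul (by positivity) (by positivity),
        Real.log_mul (by positivity) (by positivity),
        Real.log_exp, Real.log_pow, Real.log_div hs0.ne' hexp.ne', Real.log_exp] at h1
    calc Real.log s.factorial ≤ 1 + Real.log s + (s:ℕ) * (Real.log s - 1) := h1
      _ = 1 + Real.log s + (s:ℝ) * Real.log s - s := by push_cast; ring
  have h2 : Real.log s.factorial / s ≤ (1 + Real.log s)/s + Real.log s - 1 := by
    rw [div_le_iff₀ hs0]
    have : ((1 + Real.log s)/s + Real.log s - 1) * s
        = (1 + Real.log s) + ((s:ℝ) * Real.log s - s) := by field_simp; ring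
    rw [this]
    linarith
  linarith

lemma W_tendsto (k : ℕ) :
    Tendsto (fun s : ℕ => Real.exp ((k:ℝ)*Real.log 2 + 1 - (1+Real.log s)/s)) atTop
      (nhds ((2:ℝ)^k * Real.exp 1)) := by
  have h1 : Tendsto (fun s : ℕ => (1+Real.log s)/s) atTop (nhds 0) := by
    have h2 := tendsto_one_div_atTop_nhds_zero_nat.add tendsto_log_nat_div
    rw [add_zero] at h2
    apply h2.congr
    intro n
    ring
  have h3 := (h1.const_sub ((k:ℝ)*Real.log 2 + 1))
  rw [sub_zero] at h3
  have h4 := (Real.continuous_exp.tendsto _).comp h3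
  have h5 : Real.exp ((k:ℝ)*Real.log 2 + 1) = (2:ℝ)^k * Real.exp 1 := by
    rw [Real.exp_add]
    congr 1
    rw [Real.exp_nat_mul, Real.exp_log two_pos]
  rw [h5] at h4
  exact h4

end Analysis2

/-- Apex^k F has growth constant 2^k e. -/
theorem stmt_2 (k : ℕ) (hk : 1 ≤ k) :
    Filter.Tendsto
      (fun n : ℕ => ((apexCount n k : ℝ) / (Nat.factorial n : ℝ)) ^ ((n : ℝ)⁻¹))
      Filter.atTop (nhds (2 ^ k * Real.exp 1)) := by
  rw [tendsto_order]
  constructor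
  · -- lower bound
    intro b hb
    obtain ⟨s, hs1, hbs⟩ : ∃ s : ℕ, 1 ≤ s ∧
        b < Real.exp ((k:ℝ)*Real.log 2 + 1 - (1+Real.log s)/s) := by
      have h := (W_tendsto k).eventually (eventually_gt_nhds hb)
      exact ((eventually_ge_atTop 1).and h).exists
    have hs0 : (0:ℝ) < s := by exact_mod_cast hs1
    set ℓ := (k:ℝ)*Real.log 2 + Real.log s - Real.log s.factorial / s with hℓ
    set vlog : ℕ → ℝ := fun n =>
      (Real.log (Nn k s n).factorial + (Nn k s n : ℝ) * Real.log s
       + (((n-k)*k : ℕ) : ℝ) * Real.log 2 - (Hn k s n : ℝ) * Real.log s.factorial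
       - (s:ℝ) * Real.log s - Real.log n.factorial) / n with hvlog
    have hv : Tendsto (fun n : ℕ => Real.exp (vlog n)) atTop (nhds (Real.exp ℓ)) :=
      (Real.continuous_exp.tendsto _).comp (tendsto_vlog k s hk hs1)
    have hbl : b < Real.exp ℓ :=
      lt_of_lt_of_le hbs (Real.exp_le_exp.2 (level_log_ge k s hs1))
    have hev1 : ∀ᶠ n in atTop, b < Real.exp (vlog n) :=
      hv.eventually (eventually_gt_nhds hbl)
    have hev2 : ∀ᶠ n in atTop,
        Real.exp (vlog n) ≤ ((apexCount n k : ℝ) / (Nat.factorial n : ℝ)) ^ ((n : ℝ)⁻¹) := by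
      filter_upwards [eventually_ge_atTop (k+s+2)] with n hn
      have hn0 : (0:ℝ) < n := by exact_mod_cast (show 0 < n by omega)
      set X : ℕ := (Nn k s n).factorial * s^(Nn k s n) * 2^((n-k)*k) with hX
      set Y : ℕ := s.factorial^(Hn k s n) * s^s with hY
      have hcount : X ≤ apexCount n k * Y := count_lower k s n hk hs1 hn
      have hX0 : (0:ℝ) < X := by
        have : 0 < X := by positivity
        exact_mod_cast this
      have hY0 : (0:ℝ) < Y := by
        have : 0 < Y := by positivity
        exact_mod_cast this
      have hf0 : (0:ℝ) < (n.factorial : ℝ) := by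
        exact_mod_cast n.factorial_pos
      have step1 : (X:ℝ)/((Y:ℝ) * n.factorial) ≤ (apexCount n k : ℝ)/(n.factorial:ℝ) := by
        rw [div_le_div_iff₀ (by positivity) hf0]
        have hc : (X:ℝ) ≤ (apexCount n k : ℝ) * Y := by exact_mod_cast hcount
        calc (X:ℝ) * n.factorial ≤ ((apexCount n k : ℝ) * Y) * n.factorial :=
              mul_le_mul_of_nonneg_right hc hf0.le
          _ = (apexCount n k : ℝ) * ((Y:ℝ) * n.factorial) := by ring
      have step2 : ((X:ℝ)/((Y:ℝ)*n.factorial))^((n:ℝ)⁻¹)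
          ≤ ((apexCount n k : ℝ)/(n.factorial:ℝ))^((n:ℝ)⁻¹) :=
        Real.rpow_le_rpow (by positivity) step1 (by positivity)
      have hlogX : Real.log (X:ℝ) = Real.log (Nn k s n).factorial
          + (Nn k s n : ℝ)*Real.log s + (((n-k)*k:ℕ):ℝ)*Real.log 2 := by
        have hXc : (X:ℝ) = ((Nn k s n).factorial : ℝ) * (s:ℝ)^(Nn k s n) * (2:ℝ)^((n-k)*k) := by
          rw [hX]; push_cast; ring
        rw [hXc, Real.log_mul (by positivity) (by positivity),
          Real.log_mul (by positivity) (by positivity), Real.log_pow, Real.log_pow]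
      have hlogY : Real.log (Y:ℝ) = (Hn k s n : ℝ)*Real.log s.factorial
          + (s:ℝ)*Real.log s := by
        have hYc : (Y:ℝ) = ((s.factorial:ℝ))^(Hn k s n) * (s:ℝ)^s := by
          rw [hY]; push_cast; ring
        rw [hYc, Real.log_mul (by positivity) (by positivity), Real.log_pow, Real.log_pow]
      have step3 : Real.exp (vlog n) = ((X:ℝ)/((Y:ℝ)*n.factorial))^((n:ℝ)⁻¹) := by
        rw [Real.rpow_def_of_pos (by positivity),
          Real.log_div hX0.ne' (by positivity),
          Real.log_mul hY0.ne' hf0.ne', hlogX, hlogY, hvlog]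
        congr 1
        field_simp
        ring
      rw [step3]
      exact step2
    filter_upwards [hev1, hev2] with n h1 h2
    exact lt_of_lt_of_le h1 h2
  · -- upper bound
    intro b hb
    have h2 : Tendsto (fun n : ℕ => Real.exp ((k:ℝ)*Real.log 2 + 1 + (k:ℝ)*(Real.log n / n)))
        atTop (nhds ((2:ℝ)^k * Real.exp 1)) := by
      have h1 : Tendsto (fun n : ℕ => (k:ℝ)*Real.log 2 + 1 + (k:ℝ)*(Real.log n / n)) atTop
          (nhds ((k:ℝ)*Real.log 2 + 1)) := by
        have := (tendsto_log_nat_div.const_mul (k:ℝ)).const_add ((k:ℝ)*Real.log 2 + 1)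
        simpa using this
      have h4 := (Real.continuous_exp.tendsto _).comp h1
      have h5 : Real.exp ((k:ℝ)*Real.log 2 + 1) = (2:ℝ)^k * Real.exp 1 := by
        rw [Real.exp_add]
        congr 1
        rw [Real.exp_nat_mul, Real.exp_log two_pos]
      rwa [h5] at h4
    have hev : ∀ᶠ n : ℕ in atTop,
        ((apexCount n k : ℝ) / (Nat.factorial n : ℝ)) ^ ((n : ℝ)⁻¹)
          ≤ Real.exp ((k:ℝ)*Real.log 2 + 1 + (k:ℝ)*(Real.log n / n)) := by
      filter_upwards [eventually_ge_atTop 1] with n hn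
      have hn0 : (0:ℝ) < n := by exact_mod_cast (show 0 < n by omega)
      have hf0 : (0:ℝ) < (n.factorial : ℝ) := by exact_mod_cast n.factorial_pos
      have c1 : (apexCount n k : ℝ) ≤ (n:ℝ)^k * 2^(k*n) * (n:ℝ)^n := by
        exact_mod_cast count_upper k n hk hn
      have c2 := pow_self_le_exp_mul_factorial n
      have c3 : (apexCount n k : ℝ)/(n.factorial:ℝ) ≤ (n:ℝ)^k * 2^(k*n) * Real.exp 1^n := by
        rw [div_le_iff₀ hf0]
        calc (apexCount n k : ℝ) ≤ (n:ℝ)^k * 2^(k*n) * (n:ℝ)^n := c1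
          _ ≤ (n:ℝ)^k * 2^(k*n) * (Real.exp 1^n * n.factorial) := by
              apply mul_le_mul_of_nonneg_left c2 (by positivity)
          _ = (n:ℝ)^k * 2^(k*n) * Real.exp 1^n * n.factorial := by ring
      have c4 : ((apexCount n k : ℝ)/(n.factorial:ℝ))^((n:ℝ)⁻¹)
          ≤ ((n:ℝ)^k * 2^(k*n) * Real.exp 1^n)^((n:ℝ)⁻¹) :=
        Real.rpow_le_rpow (by positivity) c3 (by positivity)
      have c5 : ((n:ℝ)^k * 2^(k*n) * Real.exp 1^n)^((n:ℝ)⁻¹)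
          = Real.exp ((k:ℝ)*Real.log 2 + 1 + (k:ℝ)*(Real.log n / n)) := by
        rw [Real.rpow_def_of_pos (by positivity),
          Real.log_mul (by positivity) (by positivity),
          Real.log_mul (by positivity) (by positivity),
          Real.log_pow, Real.log_pow, Real.log_pow, Real.log_exp]
        congr 1
        push_cast
        field_simp
        ring
      rw [← c5]
      exact c4
    have hev2 : ∀ᶠ n : ℕ in atTop,
        Real.exp ((k:ℝ)*Real.log 2 + 1 + (k:ℝ)*(Real.log n / n)) < b :=
      h2.eventually (eventually_lt_nhds hb)
    filter_upwards [hev, hev2] with n ha hb2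
    exact lt_of_le_of_lt ha hb2
end

section
/- Let k be a positive integer. If a finite graph G does not contain k+1 pairwise vertex-disjoint cycles, then G has a k-redundant blocker of size at most f(k) + k. -/
open SimpleGraph Filter Real

set_option linter.unusedSectionVars false
set_option maxHeartbeats 1000000

namespace EPAux
variable {V : Type} [DecidableEq V] {G : SimpleGraph V}




lemma lift_walk {A : Set V} :
    ∀ {u v : V} (w : G.Walk u v) (_ : ∀ x ∈ w.support, x ∈ A) (hu : u ∈ A) (hv : v ∈ A),
      ∃ w' : (G.induce A).Walk ⟨u, hu⟩ ⟨v, hv⟩,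
        w'.map (SimpleGraph.Embedding.induce (G := G) A).toHom = w := by
  intro u v w
  induction w with
  | nil => intro _ hu hv; exact ⟨Walk.nil, rfl⟩
  | @cons a b c h p ih =>
      intro hA hu hv
      have hb : b ∈ A := hA b (by simp [Walk.support_cons])
      obtain ⟨p', hp'⟩ := ih (fun x hx => hA x (by simp [Walk.support_cons, hx])) hb hv
      refine ⟨Walk.cons (by exact h) p', ?_⟩
      subst hp'; rfl

lemma not_isAcyclic_of_cycle {A : Set V} {u : V} (c : G.Walk u u) (hc : c.IsCycle)
    (hA : ∀ x ∈ c.support, x ∈ A) : ¬ (G.induce A).IsAcyclic := by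
  intro hac
  have hu : u ∈ A := hA u c.start_mem_support
  obtain ⟨c', hc'⟩ := lift_walk c hA hu hu
  have : c'.IsCycle := by
    have hinj : Function.Injective (SimpleGraph.Embedding.induce (G := G) A).toHom :=
      (SimpleGraph.Embedding.induce (G := G) A).injective
    rw [← Walk.map_isCycle_iff_of_injective hinj, hc']
    exact hc
  exact hac c' this

lemma isBlocker_iff {S : Set V} :
    IsBlocker G S ↔ ∀ (u : V) (c : G.Walk u u), c.IsCycle → ∃ x ∈ c.support, x ∈ S := by
  constructor
  · intro h u c hc
    by_contra hx
    push_neg at hx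
    exact not_isAcyclic_of_cycle c hc (fun x hxs => hx x hxs) h
  · rintro h ⟨v, hv⟩ c' hc'
    have hinj : Function.Injective (SimpleGraph.Embedding.induce (G := G) Sᶜ).toHom :=
      (SimpleGraph.Embedding.induce (G := G) Sᶜ).injective
    have hc : ((c'.map (SimpleGraph.Embedding.induce (G := G) Sᶜ).toHom)).IsCycle :=
      (Walk.map_isCycle_iff_of_injective hinj).mpr hc'
    obtain ⟨x, hxs, hxS⟩ := h v _ hc
    have hxs' : x ∈ (c'.map (SimpleGraph.Embedding.induce (G := G) Sᶜ).toHom).support := hxs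
    rw [Walk.support_map] at hxs'
    obtain ⟨y, hy, rfl⟩ := List.mem_map.mp hxs'
    exact y.2 hxS




lemma head_nbr_unique {a b z₁ z₂ : V} {p : G.Walk a b} (hp : p.IsPath)
    (h1 : s(a, z₁) ∈ p.edges) (h2 : s(a, z₂) ∈ p.edges) : z₁ = z₂ := by
  cases p with
  | nil => simp at h1
  | @cons _ c _ h q =>
    rw [Walk.cons_isPath_iff] at hp
    have key : ∀ z, s(a, z) ∈ (Walk.cons h q).edges → z = c := by
      intro z hz
      rw [Walk.edges_cons, List.mem_cons] at hz
      rcases hz with hz | hz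
      · rw [Sym2.eq_iff] at hz
        rcases hz with ⟨_, rfl⟩ | ⟨hac, rfl⟩
        · rfl
        · exact absurd hac h.ne
      · exact absurd (Walk.fst_mem_support_of_mem_edges q hz) hp.2
    rw [key z₁ h1, key z₂ h2]

lemma exists_leaf [Fintype V] (U : Finset V)
    (hU : ∀ (u : V) (c : G.Walk u u), c.IsCycle → ∃ x ∈ c.support, x ∉ U)
    (hne : U.Nonempty) :
    ∃ y ∈ U, ∀ z₁ z₂, z₁ ∈ U → z₂ ∈ U → G.Adj y z₁ → G.Adj y z₂ → z₁ = z₂ := by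
  by_contra hcon
  push_neg at hcon
  have key : ∀ n : ℕ, ∃ (a b : V) (p : G.Walk a b), p.IsPath ∧ (∀ x ∈ p.support, x ∈ U)
      ∧ n ≤ p.length := by
    intro n
    induction n with
    | zero =>
        obtain ⟨a, ha⟩ := hne
        exact ⟨a, a, Walk.nil, Walk.IsPath.nil, by simp [ha], by simp⟩
    | succ n ih =>
        obtain ⟨a, b, p, hp, hsup, hlen⟩ := ih
        have haU : a ∈ U := hsup a p.start_mem_support
        obtain ⟨z₁, z₂, hz₁U, hz₂U, hadj₁, hadj₂, hzne⟩ := hcon a haU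
        have build : ∀ z, z ∈ U → z ∈ p.support → G.Adj a z → s(a, z) ∉ p.edges → False := by
          intro z hzU hzs hadj hne'
          have hw : (p.takeUntil z hzs).IsPath := hp.takeUntil hzs
          have hcyc : (Walk.cons hadj.symm (p.takeUntil z hzs)).IsCycle := by
            rw [Walk.cons_isCycle_iff]
            refine ⟨hw, ?_⟩
            rw [Sym2.eq_swap]
            intro hmem
            exact hne' (Walk.edges_takeUntil_subset _ hzs hmem)
          obtain ⟨x, hxs, hxU⟩ := hU z _ hcyc
          apply hxU
          rw [Walk.support_cons, List.mem_cons] at hxs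
          rcases hxs with rfl | hxs
          · exact hzU
          · exact hsup x (Walk.support_takeUntil_subset _ hzs hxs)
        have ext : ∀ z, z ∈ U → G.Adj a z → z ∉ p.support →
            ∃ (a' b' : V) (p' : G.Walk a' b'), p'.IsPath ∧ (∀ x ∈ p'.support, x ∈ U)
              ∧ n + 1 ≤ p'.length := by
          intro z hzU hadj hzs
          refine ⟨z, b, Walk.cons hadj.symm p, ?_, ?_, ?_⟩
          · rw [Walk.cons_isPath_iff]; exact ⟨hp, hzs⟩
          · intro x hx
            rw [Walk.support_cons, List.mem_cons] at hx
            rcases hx with rfl | hx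
            · exact hzU
            · exact hsup x hx
          · rw [Walk.length_cons]; omega
        by_cases h₁ : z₁ ∈ p.support
        · by_cases h₂ : z₂ ∈ p.support
          · exfalso
            have hor : s(a, z₁) ∉ p.edges ∨ s(a, z₂) ∉ p.edges := by
              by_contra hcc
              push_neg at hcc
              exact hzne (head_nbr_unique hp hcc.1 hcc.2)
            rcases hor with he | he
            · exact build z₁ hz₁U h₁ hadj₁ he
            · exact build z₂ hz₂U h₂ hadj₂ he
          · exact ext z₂ hz₂U hadj₂ h₂
        · exact ext z₁ hz₁U hadj₁ h₁
  obtain ⟨a, b, p, hp, _, hlen⟩ := key (Fintype.card V)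
  have := hp.length_lt
  omega




def IsPathSupp (G : SimpleGraph V) (P : Finset V) : Prop :=
  ∃ (a b : V) (p : G.Walk a b), p.IsPath ∧ p.support.toFinset = P

lemma IsPathSupp.nonempty {P : Finset V} (h : IsPathSupp G P) : P.Nonempty := by
  obtain ⟨a, b, p, _, rfl⟩ := h
  exact ⟨a, by simp [List.mem_toFinset, p.start_mem_support]⟩

lemma nbr_in_path : ∀ {a b : V} (p : G.Walk a b) (y : V), y ∈ p.support →
    p.support.toFinset ≠ {y} → ∃ z ∈ p.support, G.Adj y z := by
  intro a b p
  induction p with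
  | nil =>
      intro y hy hne
      simp only [Walk.support_nil, List.mem_singleton] at hy
      subst hy
      simp at hne
  | @cons a c b h q ih =>
      intro y hy hne
      rw [Walk.support_cons, List.mem_cons] at hy
      rcases hy with rfl | hy
      · exact ⟨c, by simp [Walk.support_cons, q.start_mem_support], h⟩
      · by_cases hq1 : q.support.toFinset = {y}
        · have hc : c = y := by
            have : c ∈ q.support.toFinset := by simp [q.start_mem_support]
            rw [hq1] at this; simpa using this
          subst hc
          exact ⟨a, by simp [Walk.support_cons], h.symm⟩
        · obtain ⟨z, hz, hadj⟩ := ih y hy hq1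
          exact ⟨z, by simp [Walk.support_cons, hz], hadj⟩

lemma interior_two_nbrs : ∀ {a b : V} (p : G.Walk a b), p.IsPath → ∀ y, y ∈ p.support →
    y ≠ a → y ≠ b →
    ∃ z₁ z₂, z₁ ≠ z₂ ∧ G.Adj y z₁ ∧ G.Adj y z₂ ∧ z₁ ∈ p.support ∧ z₂ ∈ p.support := by
  intro a b p
  induction p with
  | nil =>
      intro _ y hy hya _
      simp only [Walk.support_nil, List.mem_singleton] at hy
      exact absurd hy hya
  | @cons a c b h q ih =>
      intro hp y hy hya hyb
      rw [Walk.cons_isPath_iff] at hp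
      rw [Walk.support_cons, List.mem_cons] at hy
      rcases hy with rfl | hy
      · exact absurd rfl hya
      · by_cases hyc : y = c
        · subst hyc
          cases q with
          | nil => exact absurd rfl hyb
          | @cons c d b h2 r =>
              refine ⟨a, d, ?_, h.symm, h2, by simp [Walk.support_cons],
                by simp [Walk.support_cons, r.start_mem_support]⟩
              intro had
              apply hp.2
              subst had
              simp [Walk.support_cons, r.start_mem_support]
        · obtain ⟨z₁, z₂, hne12, ha1, ha2, hm1, hm2⟩ := ih hp.1 y hy hyc hyb
          exact ⟨z₁, z₂, hne12, ha1, ha2, by simp [Walk.support_cons, hm1],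
            by simp [Walk.support_cons, hm2]⟩

lemma erase_head {a b : V} (p : G.Walk a b) (hp : p.IsPath)
    (hne : p.support.toFinset ≠ {a}) : IsPathSupp G (p.support.toFinset.erase a) := by
  cases p with
  | nil => simp at hne
  | @cons a c b h q =>
      rw [Walk.cons_isPath_iff] at hp
      have ha : a ∉ q.support.toFinset := by simpa using hp.2
      refine ⟨c, b, q, hp.1, ?_⟩
      rw [Walk.support_cons, List.toFinset_cons, Finset.erase_insert ha]

lemma erase_pathSupp {U : Finset V} {P : Finset V} {y : V} (hP : IsPathSupp G P)
    (hPU : P ⊆ U)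
    (hleaf : ∀ z₁ z₂, z₁ ∈ U → z₂ ∈ U → G.Adj y z₁ → G.Adj y z₂ → z₁ = z₂)
    (hy : y ∈ P) (hne : P ≠ {y}) : IsPathSupp G (P.erase y) := by
  obtain ⟨a, b, p, hp, rfl⟩ := hP
  by_cases hya : y = a
  · subst hya; exact erase_head p hp hne
  · by_cases hyb : y = b
    · subst hyb
      have hrev : p.reverse.support.toFinset = p.support.toFinset := by
        rw [Walk.support_reverse, List.toFinset_reverse]
      have := erase_head p.reverse hp.reverse (by rw [hrev]; exact hne)
      rwa [hrev] at this
    · exfalso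
      obtain ⟨z₁, z₂, hne12, ha1, ha2, hm1, hm2⟩ :=
        interior_two_nbrs p hp y (by simpa using hy) hya hyb
      exact hne12 (hleaf z₁ z₂ (hPU (by simpa using hm1)) (hPU (by simpa using hm2)) ha1 ha2)

lemma cycle_erase_pathSupp {v : V} (c : G.Walk v v) (hc : c.IsCycle) :
    IsPathSupp G (c.support.toFinset.erase v) := by
  cases c with
  | nil => simp at hc
  | @cons _ w _ h q =>
      rw [Walk.cons_isCycle_iff] at hc
      obtain ⟨hq, _⟩ := hc
      have hrev : q.reverse.IsPath := hq.reverse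
      cases hq' : q.reverse with
      | nil => exact (h.ne rfl).elim
      | @cons _ x _ h2 r =>
          rw [hq'] at hrev
          rw [Walk.cons_isPath_iff] at hrev
          obtain ⟨hr, hvr⟩ := hrev
          have hqsupp : q.support.toFinset = insert v r.support.toFinset := by
            have : q.support.toFinset = q.reverse.support.toFinset := by
              rw [Walk.support_reverse, List.toFinset_reverse]
            rw [this, hq', Walk.support_cons, List.toFinset_cons]
          refine ⟨x, w, r, hr, ?_⟩
          rw [Walk.support_cons, List.toFinset_cons, hqsupp, Finset.insert_idem,
            Finset.erase_insert (by simpa using hvr)]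
lemma abs_core [Fintype V] :
    ∀ (n : ℕ) (U : Finset V), U.card ≤ n →
      (∀ (u : V) (c : G.Walk u u), c.IsCycle → ∃ x ∈ c.support, x ∉ U) →
      ∀ (Ps : Finset (Finset V)), Ps.Nonempty →
        (∀ P ∈ Ps, P ⊆ U ∧ IsPathSupp G P) →
        ∃ P₀ ∈ Ps, ∃ x₀ ∈ P₀, ∀ Q ∈ Ps, x₀ ∉ Q → ∀ w ∈ Q, w ∉ P₀ := by
  intro n
  induction n with
  | zero =>
      intro U hcard hU Ps hne hmem
      exfalso
      obtain ⟨P, hP⟩ := hne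
      obtain ⟨a, ha⟩ := (hmem P hP).2.nonempty
      have haU := (hmem P hP).1 ha
      rw [Nat.le_zero, Finset.card_eq_zero] at hcard
      rw [hcard] at haU
      exact absurd haU (Finset.notMem_empty a)
  | succ n ih =>
      intro U hcard hU Ps hne hmem
      by_cases hcov : ∃ y ∈ U, ∀ P ∈ Ps, y ∉ P
      · obtain ⟨y, hyU, hyP⟩ := hcov
        refine ih (U.erase y) ?_ ?_ Ps hne ?_
        · rw [Finset.card_erase_of_mem hyU]; omega
        · intro u c hc
          obtain ⟨x, hx, hxU⟩ := hU u c hc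
          exact ⟨x, hx, fun hmem' => hxU (Finset.mem_of_mem_erase hmem')⟩
        · intro P hP
          refine ⟨fun w hw => Finset.mem_erase.mpr ⟨?_, (hmem P hP).1 hw⟩, (hmem P hP).2⟩
          rintro rfl
          exact hyP P hP hw
      · push_neg at hcov
        have hUne : U.Nonempty := by
          obtain ⟨P, hP⟩ := hne
          obtain ⟨a, ha⟩ := (hmem P hP).2.nonempty
          exact ⟨a, (hmem P hP).1 ha⟩
        obtain ⟨y, hyU, hleaf⟩ := exists_leaf U hU hUne
        by_cases hsing : ∃ P ∈ Ps, P = {y}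
        · obtain ⟨P₀, hP₀, rfl⟩ := hsing
          refine ⟨{y}, hP₀, y, Finset.mem_singleton_self y, ?_⟩
          intro Q hQ hyQ w hwQ hwP
          rw [Finset.mem_singleton] at hwP
          subst hwP
          exact hyQ hwQ
        · have hmem' : ∀ P' ∈ Ps.image (fun P => P.erase y),
              P' ⊆ U.erase y ∧ IsPathSupp G P' := by
            intro P' hP'
            obtain ⟨P, hP, rfl⟩ := Finset.mem_image.mp hP'
            constructor
            · exact Finset.erase_subset_erase y (hmem P hP).1
            · by_cases hyP : y ∈ P
              · exact erase_pathSupp (hmem P hP).2 (hmem P hP).1 hleaf hyP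
                  (fun h => hsing ⟨P, hP, h⟩)
              · rw [Finset.erase_eq_of_notMem hyP]
                exact (hmem P hP).2
          have hrec := ih (U.erase y)
            (by rw [Finset.card_erase_of_mem hyU]; omega)
            (by
              intro u c hc
              obtain ⟨x, hx, hxU⟩ := hU u c hc
              exact ⟨x, hx, fun hmem'' => hxU (Finset.mem_of_mem_erase hmem'')⟩)
            (Ps.image (fun P => P.erase y)) (hne.image _) hmem'
          obtain ⟨P₀', hP₀', x₀, hx₀, hdisj⟩ := hrec
          obtain ⟨P₀, hP₀, hP₀e⟩ := Finset.mem_image.mp hP₀'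
          refine ⟨P₀, hP₀, x₀, Finset.mem_of_mem_erase (hP₀e ▸ hx₀), ?_⟩
          intro Q hQ hxQ w hwQ hwP
          have hxQ' : x₀ ∉ Q.erase y := fun h => hxQ (Finset.mem_of_mem_erase h)
          have hQ' : Q.erase y ∈ Ps.image (fun P => P.erase y) :=
            Finset.mem_image_of_mem _ hQ
          have hdQ := hdisj (Q.erase y) hQ' hxQ'
          by_cases hwy : w = y
          · subst hwy
            obtain ⟨aQ, bQ, pQ, hpQ, hQeq⟩ := (hmem Q hQ).2
            obtain ⟨a0, b0, p0, hp0, h0eq⟩ := (hmem P₀ hP₀).2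
            obtain ⟨z, hz, hadjz⟩ := nbr_in_path pQ w
              (by rw [← List.mem_toFinset, hQeq]; exact hwQ)
              (by rw [hQeq]; exact fun h => hsing ⟨Q, hQ, h⟩)
            obtain ⟨z', hz', hadjz'⟩ := nbr_in_path p0 w
              (by rw [← List.mem_toFinset, h0eq]; exact hwP)
              (by rw [h0eq]; exact fun h => hsing ⟨P₀, hP₀, h⟩)
            have hzQ : z ∈ Q := by rw [← hQeq]; exact List.mem_toFinset.mpr hz
            have hz'P : z' ∈ P₀ := by rw [← h0eq]; exact List.mem_toFinset.mpr hz'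
            have hzz : z = z' :=
              hleaf z z' ((hmem Q hQ).1 hzQ) ((hmem P₀ hP₀).1 hz'P) hadjz hadjz'
            subst hzz
            have hzy : z ≠ w := fun h => hadjz.ne h.symm
            exact hdQ z (Finset.mem_erase.mpr ⟨hzy, hzQ⟩)
              (hP₀e ▸ Finset.mem_erase.mpr ⟨hzy, hz'P⟩)
          · exact hdQ w (Finset.mem_erase.mpr ⟨hwy, hwQ⟩)
              (hP₀e ▸ Finset.mem_erase.mpr ⟨hwy, hwP⟩)


def Cond (G : SimpleGraph V) (B₀ Y S : Finset V) (p : Σ v : V, G.Walk v v) : Prop :=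
  p.2.IsCycle ∧ p.2.support.toFinset ∩ B₀ = {p.1} ∧ p.2.support.toFinset ∩ Y = ∅ ∧ p.1 ∉ S

lemma apex_mem {B₀ : Finset V} (p : Σ v : V, G.Walk v v)
    (h : p.2.support.toFinset ∩ B₀ = {p.1}) : p.1 ∈ B₀ := by
  have : p.1 ∈ p.2.support.toFinset ∩ B₀ := by
    rw [h]; exact Finset.mem_singleton_self _
  exact (Finset.mem_inter.mp this).2

lemma erase_subset_compl [Fintype V] {B₀ : Finset V} (p : Σ v : V, G.Walk v v)
    (h : p.2.support.toFinset ∩ B₀ = {p.1}) :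
    p.2.support.toFinset.erase p.1 ⊆ Finset.univ \ B₀ := by
  intro x hx
  obtain ⟨hxne, hxs⟩ := Finset.mem_erase.mp hx
  rw [Finset.mem_sdiff]
  refine ⟨Finset.mem_univ x, fun hxB => hxne ?_⟩
  have : x ∈ p.2.support.toFinset ∩ B₀ := Finset.mem_inter.mpr ⟨hxs, hxB⟩
  rw [h] at this
  exact Finset.mem_singleton.mp this

lemma main_lemma [Fintype V] (B₀ : Finset V)
    (hB₀ : ∀ (u : V) (c : G.Walk u u), c.IsCycle → ∃ x ∈ c.support, x ∈ B₀) :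
    ∀ (j : ℕ) (Y S : Finset V),
      (¬ ∃ c : Fin (j + 1) → Σ v : V, G.Walk v v,
          (∀ i, Cond G B₀ Y S (c i)) ∧
          ∀ i i', i ≠ i' → ∀ x, x ∈ (c i).2.support → x ∉ (c i').2.support) →
      ∃ X S' : Finset V, X.card ≤ j ∧ S'.card ≤ j ∧ X ∩ B₀ = ∅ ∧ S' ⊆ B₀ ∧
        ∀ p : Σ v : V, G.Walk v v, p.2.IsCycle → p.2.support.toFinset ∩ B₀ = {p.1} →
          p.2.support.toFinset ∩ (Y ∪ X) = ∅ → p.1 ∉ S → p.1 ∈ S' := by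
  intro j
  induction j with
  | zero =>
      intro Y S H
      refine ⟨∅, ∅, by simp, by simp, by simp, by simp, ?_⟩
      intro p hc hB hY hS
      exfalso
      apply H
      refine ⟨fun _ => p, fun i => ⟨hc, hB, by simpa using hY, hS⟩, ?_⟩
      intro i i' hii'
      exact absurd (Subsingleton.elim (α := Fin 1) i i') hii'
  | succ j ih =>
      intro Y S H
      by_cases hex : ∃ p : Σ v : V, G.Walk v v, Cond G B₀ Y S p
      · -- members family
        set M : Finset (Finset V) := Set.Finite.toFinset (Set.toFinite
          {P : Finset V | ∃ p : Σ v : V, G.Walk v v,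
            Cond G B₀ Y S p ∧ P = p.2.support.toFinset.erase p.1}) with hM
        have hMmem : ∀ P : Finset V, P ∈ M ↔ ∃ p : Σ v : V, G.Walk v v,
            Cond G B₀ Y S p ∧ P = p.2.support.toFinset.erase p.1 := by
          intro P
          rw [hM, Set.Finite.mem_toFinset, Set.mem_setOf_eq]
        have hMne : M.Nonempty := by
          obtain ⟨p, hp⟩ := hex
          exact ⟨_, (hMmem _).mpr ⟨p, hp, rfl⟩⟩
        have habs := abs_core (Fintype.card V) (Finset.univ \ B₀)
          (le_trans (Finset.card_le_univ _) (le_of_eq Finset.card_univ))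
          (by
            intro u c hc
            obtain ⟨x, hx, hxB⟩ := hB₀ u c hc
            exact ⟨x, hx, by simp [Finset.mem_sdiff, hxB]⟩)
          M hMne
          (by
            intro P hP
            obtain ⟨p, hp, rfl⟩ := (hMmem P).mp hP
            exact ⟨erase_subset_compl p hp.2.1, cycle_erase_pathSupp p.2 hp.1⟩)
        obtain ⟨P₀, hP₀M, x₀, hx₀, hdisj⟩ := habs
        obtain ⟨p₀, hp₀cond, rfl⟩ := (hMmem P₀).mp hP₀M
        have hx₀supp : x₀ ∈ p₀.2.support.toFinset := Finset.mem_of_mem_erase hx₀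
        have hx₀B₀ : x₀ ∉ B₀ := by
          have := erase_subset_compl p₀ hp₀cond.2.1 hx₀
          rw [Finset.mem_sdiff] at this
          exact this.2
        have hv₀B₀ : p₀.1 ∈ B₀ := apex_mem p₀ hp₀cond.2.1
        -- key disjointness for extension
        have keydisj : ∀ q : Σ v : V, G.Walk v v,
            Cond G B₀ (insert x₀ Y) (insert p₀.1 S) q →
            ∀ x, x ∈ p₀.2.support → x ∉ q.2.support := by
          intro q hq x hxp₀ hxq
          obtain ⟨hq1, hq2, hq3, hq4⟩ := hq
          have hqYS : Cond G B₀ Y S q := by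
            refine ⟨hq1, hq2, ?_, fun h => hq4 (Finset.mem_insert_of_mem h)⟩
            rw [Finset.eq_empty_iff_forall_notMem]
            intro x' hx'
            rw [Finset.eq_empty_iff_forall_notMem] at hq3
            apply hq3 x'
            rw [Finset.mem_inter] at hx' ⊢
            exact ⟨hx'.1, Finset.mem_insert_of_mem hx'.2⟩
          have hQM : q.2.support.toFinset.erase q.1 ∈ M := (hMmem _).mpr ⟨q, hqYS, rfl⟩
          have hx₀q : x₀ ∉ q.2.support.toFinset := by
            intro hmem
            rw [Finset.eq_empty_iff_forall_notMem] at hq3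
            exact hq3 x₀ (Finset.mem_inter.mpr ⟨hmem, Finset.mem_insert_self _ _⟩)
          have hd := hdisj _ hQM (fun h => hx₀q (Finset.mem_of_mem_erase h))
          by_cases hxv₀ : x = p₀.1
          · have hmem : p₀.1 ∈ q.2.support.toFinset ∩ B₀ :=
              Finset.mem_inter.mpr ⟨List.mem_toFinset.mpr (hxv₀ ▸ hxq), hv₀B₀⟩
            rw [hq2] at hmem
            exact hq4 (by
              rw [← Finset.mem_singleton.mp hmem]; exact Finset.mem_insert_self _ _)
          · have hxq1 : x ≠ q.1 := by
              intro h
              have hq1B : q.1 ∈ B₀ := apex_mem q hq2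
              have : x ∈ p₀.2.support.toFinset ∩ B₀ :=
                Finset.mem_inter.mpr ⟨List.mem_toFinset.mpr hxp₀, h ▸ hq1B⟩
              rw [hp₀cond.2.1] at this
              exact hxv₀ (Finset.mem_singleton.mp this)
            exact hd x (Finset.mem_erase.mpr ⟨hxq1, List.mem_toFinset.mpr hxq⟩)
              (Finset.mem_erase.mpr ⟨hxv₀, List.mem_toFinset.mpr hxp₀⟩)
        -- apply IH
        have H' : ¬ ∃ c : Fin (j + 1) → Σ v : V, G.Walk v v,
            (∀ i, Cond G B₀ (insert x₀ Y) (insert p₀.1 S) (c i)) ∧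
            ∀ i i', i ≠ i' → ∀ x, x ∈ (c i).2.support → x ∉ (c i').2.support := by
          rintro ⟨c, hcond, hdisjf⟩
          apply H
          refine ⟨Fin.cons p₀ c, ?_, ?_⟩
          · intro i
            refine Fin.cases ?_ ?_ i
            · simpa [Fin.cons_zero] using hp₀cond
            · intro i'
              simp only [Fin.cons_succ]
              obtain ⟨h1, h2, h3, h4⟩ := hcond i'
              refine ⟨h1, h2, ?_, fun hS => h4 (Finset.mem_insert_of_mem hS)⟩
              rw [Finset.eq_empty_iff_forall_notMem]
              intro x' hx'
              rw [Finset.eq_empty_iff_forall_notMem] at h3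
              apply h3 x'
              rw [Finset.mem_inter] at hx' ⊢
              exact ⟨hx'.1, Finset.mem_insert_of_mem hx'.2⟩
          · intro i i' hne x hx hx'
            rcases Fin.eq_zero_or_eq_succ i with rfl | ⟨i₁, rfl⟩ <;>
              rcases Fin.eq_zero_or_eq_succ i' with rfl | ⟨i₁', rfl⟩
            · exact hne rfl
            · rw [Fin.cons_zero] at hx
              rw [Fin.cons_succ] at hx'
              exact keydisj (c i₁') (hcond i₁') x hx hx'
            · rw [Fin.cons_succ] at hx
              rw [Fin.cons_zero] at hx'
              exact keydisj (c i₁) (hcond i₁) x hx' hx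
            · rw [Fin.cons_succ] at hx hx'
              refine hdisjf i₁ i₁' (fun h => hne (by rw [h])) x hx hx'
        obtain ⟨X', S''', hX'c, hS'''c, hX'B, hS'''B, hconc⟩ :=
          ih (insert x₀ Y) (insert p₀.1 S) H'
        refine ⟨insert x₀ X', insert p₀.1 S''',
          le_trans (Finset.card_insert_le _ _) (by omega),
          le_trans (Finset.card_insert_le _ _) (by omega), ?_, ?_, ?_⟩
        · rw [Finset.eq_empty_iff_forall_notMem]
          intro x hx
          rw [Finset.mem_inter, Finset.mem_insert] at hx
          rcases hx.1 with rfl | hxX'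
          · exact hx₀B₀ hx.2
          · rw [Finset.eq_empty_iff_forall_notMem] at hX'B
            exact hX'B x (Finset.mem_inter.mpr ⟨hxX', hx.2⟩)
        · exact Finset.insert_subset hv₀B₀ hS'''B
        · intro p hc hB hY hS
          by_cases hp1 : p.1 = p₀.1
          · rw [hp1]; exact Finset.mem_insert_self _ _
          · apply Finset.mem_insert_of_mem
            apply hconc p hc hB ?_ ?_
            · rw [Finset.eq_empty_iff_forall_notMem]
              intro x hx
              rw [Finset.eq_empty_iff_forall_notMem] at hY
              apply hY x
              rw [Finset.mem_inter] at hx ⊢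
              refine ⟨hx.1, ?_⟩
              have := hx.2
              rw [Finset.mem_union, Finset.mem_insert] at this
              rw [Finset.mem_union, Finset.mem_insert]
              tauto
            · rw [Finset.mem_insert]
              push_neg
              exact ⟨hp1, hS⟩
      · refine ⟨∅, ∅, by simp, by simp, by simp, by simp, ?_⟩
        intro p hc hB hY hS
        exact absurd ⟨p, hc, hB, by simpa using hY, hS⟩ hex
lemma rotate_support_toFinset {u x : V} (c : G.Walk u u) (hc : c.IsCycle) (hx : x ∈ c.support) :
    (c.rotate x hx).support.toFinset = c.support.toFinset := by
  have h1 : (c.rotate x hx).support.tail.toFinset = c.support.tail.toFinset :=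
    List.toFinset_eq_of_perm _ _ (Walk.support_rotate c x hx).perm
  have start_tail : ∀ {w : V} (d : G.Walk w w), d.IsCycle →
      d.support.toFinset = d.support.tail.toFinset := by
    intro w d hd
    cases d with
    | nil => simp at hd
    | cons h q =>
        rw [Walk.support_cons]
        simp only [List.toFinset_cons, List.tail_cons]
        exact Finset.insert_eq_self.mpr (List.mem_toFinset.mpr q.end_mem_support)
  rw [start_tail _ (hc.rotate hx), start_tail _ hc, h1]

end EPAux


/-- if f(k) is the least value in the Erdős–Pósa theorem, then every finite
graph with no k+1 disjoint cycles has a k-redundant blocker of size at most f(k)+k. -/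
theorem stmt_5 (k : ℕ) (hk : 1 ≤ k) (f : ℕ)
    (hf : IsLeast {m : ℕ | ∀ (V : Type) [Fintype V] (G : SimpleGraph V),
        ¬ HasDisjointCycles G (k + 1) →
          ∃ B : Finset V, B.card ≤ m ∧ IsBlocker G ↑B} f)
    (V : Type) [Fintype V] [DecidableEq V] (G : SimpleGraph V)
    (hG : ¬ HasDisjointCycles G (k + 1)) :
    ∃ B : Finset V, B.card ≤ f + k ∧ IsBlocker G ↑B ∧
      ∃ S : Finset V, S ⊆ B ∧ S.card ≤ k ∧
        ∀ v ∈ B, v ∉ S → IsBlocker G ↑(B \ {v}) := by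
  classical
  obtain ⟨B₀, hB₀card, hB₀⟩ := hf.1 V G hG
  have hB₀meets : ∀ (u : V) (c : G.Walk u u), c.IsCycle → ∃ x ∈ c.support, x ∈ B₀ := by
    intro u c hc
    obtain ⟨x, hx, hxS⟩ := (EPAux.isBlocker_iff.mp hB₀) u c hc
    exact ⟨x, hx, by simpa using hxS⟩
  have H : ¬ ∃ c : Fin (k + 1) → Σ v : V, G.Walk v v,
      (∀ i, EPAux.Cond G B₀ ∅ ∅ (c i)) ∧
      ∀ i i', i ≠ i' → ∀ x, x ∈ (c i).2.support → x ∉ (c i').2.support := by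
    rintro ⟨c, hcond, hdisj⟩
    exact hG ⟨c, fun i => (hcond i).1, hdisj⟩
  obtain ⟨X, S', hXc, hS'c, hXB, hS'B, hconc⟩ := EPAux.main_lemma B₀ hB₀meets k ∅ ∅ H
  refine ⟨B₀ ∪ X, le_trans (Finset.card_union_le _ _) (add_le_add hB₀card hXc), ?_, S',
    fun s hs => Finset.mem_union_left _ (hS'B hs), hS'c, ?_⟩
  · rw [EPAux.isBlocker_iff]
    intro u c hc
    obtain ⟨x, hx, hxB⟩ := hB₀meets u c hc
    exact ⟨x, hx, by simp [hxB]⟩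
  · intro v hvB hvS
    rw [EPAux.isBlocker_iff]
    intro u c hc
    by_contra hcon
    push_neg at hcon
    obtain ⟨x, hx, hxB₀⟩ := hB₀meets u c hc
    have hxv : x = v := by
      by_contra hxv
      exact hcon x hx (by simp [hxB₀, hxv])
    subst hxv
    have hrot : (c.rotate x hx).IsCycle := hc.rotate hx
    have hsupp : (c.rotate x hx).support.toFinset = c.support.toFinset :=
      EPAux.rotate_support_toFinset c hc hx
    have hB : (c.rotate x hx).support.toFinset ∩ B₀ = {x} := by
      apply Finset.Subset.antisymm
      · intro y hy
        rw [Finset.mem_inter, hsupp, List.mem_toFinset] at hy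
        rw [Finset.mem_singleton]
        by_contra hyx
        exact hcon y hy.1 (by simp [hy.2, hyx])
      · intro y hy
        rw [Finset.mem_singleton] at hy
        subst hy
        rw [Finset.mem_inter, hsupp, List.mem_toFinset]
        exact ⟨hx, hxB₀⟩
    have hY : (c.rotate x hx).support.toFinset ∩ (∅ ∪ X) = ∅ := by
      rw [Finset.eq_empty_iff_forall_notMem]
      intro y hy
      rw [Finset.mem_inter, hsupp, List.mem_toFinset, Finset.empty_union] at hy
      have hyv : y ≠ x := by
        rintro rfl
        rw [Finset.eq_empty_iff_forall_notMem] at hXB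
        exact hXB y (Finset.mem_inter.mpr ⟨hy.2, hxB₀⟩)
      exact hcon y hy.1 (by simp [hy.2, hyv])
    have hvS' : x ∈ S' :=
      hconc ⟨x, c.rotate x hx⟩ hrot hB hY (Finset.notMem_empty _)
    exact hvS hvS'
end

section
/- Let k ≥ 0 be an integer, let G be a finite graph with no k+1 pairwise vertex-disjoint cycles, and let Q be a blocker in G. Then there exist sets S ⊆ Q with |S| ≤ k and A ⊆ V(G) \ Q with |A| ≤ k such that there is no cycle C in G − S with |V(C) ∩ (Q ∪ A)| ≤ 1; equivalently, every cycle of G − S has at least two vertices in Q ∪ A. -/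
open SimpleGraph Filter Real

namespace ForestAux

variable {W : Type*} [DecidableEq W] {F : SimpleGraph W}

/-- root of the component of a vertex -/
noncomputable def root (F : SimpleGraph W) (z : W) : W := (F.connectedComponentMk z).out

lemma reachable_root (F : SimpleGraph W) (z : W) : F.Reachable (root F z) z :=
  (SimpleGraph.ConnectedComponent.exact (Quot.out_eq (F.connectedComponentMk z)))

lemma root_eq_of_reachable {x y : W} (h : F.Reachable x y) : root F x = root F y := by
  unfold root
  rw [SimpleGraph.ConnectedComponent.sound h]

/-- depth of a vertex -/
noncomputable def dep (F : SimpleGraph W) (z : W) : ℕ := F.dist (root F z) z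

lemma path_unique (hF : F.IsAcyclic) {a b : W} (p q : F.Walk a b)
    (hp : p.IsPath) (hq : q.IsPath) : p = q := by
  have := (SimpleGraph.isAcyclic_iff_path_unique.mp hF) ⟨p, hp⟩ ⟨q, hq⟩
  exact congrArg Subtype.val this

lemma dist_eq_length (hF : F.IsAcyclic) {r z : W} (p : F.Walk r z) (hp : p.IsPath) :
    F.dist r z = p.length := by
  have hr : F.Reachable r z := ⟨p⟩
  obtain ⟨q, hq⟩ := hr.exists_walk_length_eq_dist
  have hle : F.dist r z ≤ p.length := SimpleGraph.dist_le p
  have heq : q.bypass = p := path_unique hF _ _ q.bypass_isPath hp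
  have : p.length ≤ q.length := by
    rw [← heq]; exact SimpleGraph.Walk.length_bypass_le q
  omega

end ForestAux

set_option linter.unusedSectionVars false

namespace ForestAux

variable {W : Type*} [DecidableEq W] {F : SimpleGraph W}

lemma adj_dep (hF : F.IsAcyclic) {u w : W} (h : F.Adj u w) :
    dep F w = dep F u + 1 ∨ dep F u = dep F w + 1 := by
  have hroot : root F u = root F w := root_eq_of_reachable h.reachable
  set r := root F u with hr
  have hru : F.Reachable r u := reachable_root F u
  obtain ⟨q, hq⟩ := hru.exists_walk_length_eq_dist
  set P := q.bypass with hP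
  have hPpath : P.IsPath := q.bypass_isPath
  have hPlen : P.length = dep F u := by
    have := dist_eq_length hF P hPpath
    rw [dep, ← hr, this]
  have hdw : dep F w = F.dist r w := by rw [dep, ← hroot]
  by_cases hw : w ∈ P.support
  · right
    -- d u = d w + 1
    have hsplit := P.take_spec hw
    have hlen : (P.takeUntil w hw).length + (P.dropUntil w hw).length = P.length := by
      rw [← SimpleGraph.Walk.length_append, hsplit]
    have h1 : F.dist r w ≤ (P.takeUntil w hw).length := SimpleGraph.dist_le _
    have h2 : 1 ≤ (P.dropUntil w hw).length := by
      rcases Nat.eq_zero_or_pos (P.dropUntil w hw).length with h0 | h0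
      · exact absurd (SimpleGraph.Walk.eq_of_length_eq_zero h0) h.ne'
      · exact h0
    have h3 : F.dist r u ≤ F.dist r w + 1 := by
      obtain ⟨qw, hqw⟩ := (SimpleGraph.Reachable.exists_walk_length_eq_dist
        (⟨P.takeUntil w hw⟩ : F.Reachable r w))
      have := SimpleGraph.dist_le (qw.append h.symm.toWalk)
      rwa [SimpleGraph.Walk.length_append, hqw] at this
    have hdu : F.dist r u = dep F u := rfl
    have hdu2 : F.dist r u ≤ P.length := SimpleGraph.dist_le P
    have hdu3 : P.length ≤ F.dist r u := by rw [← hq]; exact SimpleGraph.Walk.length_bypass_le q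
    omega
  · left
    -- w not in P: P.concat is a path r → w
    have hnodup : (P.concat h).support.Nodup := by
      rw [SimpleGraph.Walk.support_concat]
      refine List.Nodup.append hPpath.support_nodup (List.nodup_singleton w) ?_
      intro a ha hb
      rw [List.mem_singleton] at hb
      rw [hb] at ha
      exact hw ha
    have hpath : (P.concat h).IsPath := SimpleGraph.Walk.IsPath.mk' hnodup
    have := dist_eq_length hF (P.concat h) hpath
    rw [SimpleGraph.Walk.length_concat, hPlen] at this
    rw [hdw, this]

end ForestAux

namespace ForestAux

variable {W : Type*} [DecidableEq W] {F : SimpleGraph W}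

/-- the canonical path from the root to a vertex -/
noncomputable def rpath (F : SimpleGraph W) [DecidableEq W] (z : W) : F.Walk (root F z) z :=
  (SimpleGraph.Reachable.exists_walk_length_eq_dist (reachable_root F z)).choose.bypass

lemma rpath_isPath (z : W) : (rpath F z).IsPath := SimpleGraph.Walk.bypass_isPath _

lemma rpath_length (hF : F.IsAcyclic) (z : W) : (rpath F z).length = dep F z :=
  (dist_eq_length hF _ (rpath_isPath z)).symm

lemma parent_unique (hF : F.IsAcyclic) {u w w' : W} (h : F.Adj u w) (h' : F.Adj u w')
    (hd : dep F w + 1 = dep F u) (hd' : dep F w' + 1 = dep F u) : w = w' := by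
  have key : ∀ {x : W} (hx : F.Adj u x), dep F x + 1 = dep F u →
      ∃ (p : F.Walk (root F u) x) (hp : (p.concat hx.symm).IsPath),
        p.length = dep F x ∧ p.support.getLast? = some x := by
    intro x hx hdx
    have hroot : root F u = root F x := root_eq_of_reachable hx.reachable
    have p0 := rpath F x
    have hp0len : (rpath F x).length = dep F x := rpath_length hF x
    have hp0 : (rpath F x).IsPath := rpath_isPath x
    -- transport along hroot
    refine ⟨(rpath F x).copy hroot.symm rfl, ?_, by simpa using hp0len, ?_⟩
    · apply SimpleGraph.Walk.IsPath.mk'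
      rw [SimpleGraph.Walk.support_concat]
      refine List.Nodup.append (by simpa using hp0.support_nodup) (List.nodup_singleton u) ?_
      intro a ha hb
      rw [List.mem_singleton] at hb
      rw [hb] at ha
      -- u in support of rpath F x would make dist too small
      rw [SimpleGraph.Walk.support_copy] at ha
      have h1 : F.dist (root F x) u ≤ ((rpath F x).takeUntil u ha).length :=
        SimpleGraph.dist_le _
      have h2 : ((rpath F x).takeUntil u ha).length + ((rpath F x).dropUntil u ha).length
          = (rpath F x).length := by
        rw [← SimpleGraph.Walk.length_append, SimpleGraph.Walk.take_spec]
      have h3 : dep F u = F.dist (root F x) u := by rw [dep, hroot]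
      omega
    · rw [SimpleGraph.Walk.support_copy]
      have := SimpleGraph.Walk.getLast_support (rpath F x)
      rw [List.getLast?_eq_getLast (l := (rpath F x).support) (by simp)]
      simp [this]
  obtain ⟨p, hp, hplen, hplast⟩ := key h hd
  obtain ⟨p', hp', hplen', hplast'⟩ := key h' hd'
  have : p.concat h.symm = p'.concat h'.symm := path_unique hF _ _ hp hp'
  have hsupp : p.support ++ [u] = p'.support ++ [u] := by
    have := congrArg SimpleGraph.Walk.support this
    rwa [SimpleGraph.Walk.support_concat, SimpleGraph.Walk.support_concat] at this
  have hsupp2 : p.support = p'.support := by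
    exact List.append_cancel_right hsupp
  rw [hsupp2, hplast'] at hplast
  exact (Option.some_inj.mp hplast).symm

open scoped Classical in
noncomputable def par (F : SimpleGraph W) (u : W) : W :=
  if h : ∃ w, F.Adj u w ∧ dep F w + 1 = dep F u then h.choose else u

open scoped Classical in
lemma par_eq (hF : F.IsAcyclic) {u w : W} (h : F.Adj u w) (hd : dep F w + 1 = dep F u) :
    par F u = w := by
  have hex : ∃ w', F.Adj u w' ∧ dep F w' + 1 = dep F u := ⟨w, h, hd⟩
  rw [par, dif_pos hex]
  exact parent_unique hF hex.choose_spec.1 h hex.choose_spec.2 hd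

end ForestAux

namespace ForestAux

variable {W : Type*} [DecidableEq W] {F : SimpleGraph W}

theorem claimC (hF : F.IsAcyclic) {y v : W} (p : F.Walk y v) (hp : p.IsPath)
    (hd : ∀ z ∈ p.support, dep F v ≤ dep F z) :
    (∀ j ≤ dep F y - dep F v, (par F)^[j] y ∈ p.support) ∧
      (par F)^[dep F y - dep F v] y = v := by
  induction p with
  | nil =>
    refine ⟨fun j hj => ?_, by simp⟩
    have : j = 0 := by omega
    subst this
    simp
  | @cons y w v h q ih =>
    have hqp : q.IsPath := hp.of_cons
    have hynq : y ∉ q.support := ((SimpleGraph.Walk.cons_isPath_iff h q).mp hp).2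
    have hdq : ∀ z ∈ q.support, dep F v ≤ dep F z := fun z hz =>
      hd z (by simp [hz])
    have hdy : dep F v ≤ dep F y := hd y (by simp)
    have hdw : dep F v ≤ dep F w := hdq w q.start_mem_support
    obtain ⟨ihmem, iheq⟩ := ih hqp hdq
    rcases adj_dep hF h with h1 | h2
    · -- dep w = dep y + 1 : y is the parent of w, contradiction
      have hpy : par F w = y := par_eq hF h.symm (by omega)
      have : (par F)^[1] w ∈ q.support := ihmem 1 (by omega)
      rw [Function.iterate_one, hpy] at this
      exact absurd this hynq
    · -- dep y = dep w + 1 : w is the parent of y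
      have hpw : par F y = w := par_eq hF h h2.symm
      have hsucc : dep F y - dep F v = (dep F w - dep F v) + 1 := by omega
      constructor
      · intro j hj
        cases j with
        | zero => simp
        | succ j' =>
          rw [Function.iterate_succ_apply, hpw]
          have : (par F)^[j'] w ∈ q.support := ihmem j' (by omega)
          simp [this]
      · rw [hsucc, Function.iterate_succ_apply, hpw]
        exact iheq

/-- a set is connected-in if any two members are joined by a path inside it -/
def ConnIn (F : SimpleGraph W) (T : Set W) : Prop :=
  ∀ a ∈ T, ∀ b ∈ T, ∃ p : F.Walk a b, p.IsPath ∧ ∀ z ∈ p.support, z ∈ T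

theorem helly (hF : F.IsAcyclic) {T₁ T₂ : Set W} (h₁ : ConnIn F T₁) (h₂ : ConnIn F T₂)
    {x v₁ v₂ : W} (hx₁ : x ∈ T₁) (hx₂ : x ∈ T₂) (hv₁ : v₁ ∈ T₁) (hv₂ : v₂ ∈ T₂)
    (hmin₁ : ∀ z ∈ T₁, dep F v₁ ≤ dep F z) (hmin₂ : ∀ z ∈ T₂, dep F v₂ ≤ dep F z)
    (hle : dep F v₂ ≤ dep F v₁) : v₁ ∈ T₂ := by
  obtain ⟨p₁, hp₁, hs₁⟩ := h₁ x hx₁ v₁ hv₁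
  obtain ⟨p₂, hp₂, hs₂⟩ := h₂ x hx₂ v₂ hv₂
  have c₁ := claimC hF p₁ hp₁ (fun z hz => hmin₁ z (hs₁ z hz))
  have c₂ := claimC hF p₂ hp₂ (fun z hz => hmin₂ z (hs₂ z hz))
  have hj : dep F x - dep F v₁ ≤ dep F x - dep F v₂ := Nat.sub_le_sub_left hle _
  have := c₂.1 _ hj
  rw [c₁.2] at this
  exact hs₂ _ this

end ForestAux

namespace ForestAux

open SimpleGraph Walk

variable {V : Type*} {G : SimpleGraph V} {s : Set V}

/-- transfer a walk whose support lies in `s` to the induced subgraph on `s` -/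
def induceWalk : ∀ {u v : V} (p : G.Walk u v) (h : ∀ x ∈ p.support, x ∈ s),
    (G.induce s).Walk ⟨u, h u p.start_mem_support⟩ ⟨v, h v p.end_mem_support⟩
  | _, _, Walk.nil, _ => Walk.nil
  | _, _, Walk.cons ha p, h =>
    Walk.cons (by exact ha) (induceWalk p (fun x hx => h x (by simp [hx])))

lemma induceWalk_support : ∀ {u v : V} (p : G.Walk u v) (h : ∀ x ∈ p.support, x ∈ s),
    (induceWalk p h).support.map Subtype.val = p.support
  | _, _, Walk.nil, _ => rfl
  | _, _, Walk.cons ha p, h => by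
    simp only [induceWalk, Walk.support_cons, List.map_cons]
    exact congrArg (List.cons _) (induceWalk_support p _)

lemma induceWalk_map : ∀ {u v : V} (p : G.Walk u v) (h : ∀ x ∈ p.support, x ∈ s),
    (induceWalk p h).map (SimpleGraph.Embedding.induce s).toHom = p
  | _, _, Walk.nil, _ => rfl
  | _, _, Walk.cons ha p, h => by
    simp only [induceWalk, Walk.map_cons]
    exact congrArg (Walk.cons ha) (induceWalk_map p _)

lemma induceWalk_isCycle {u : V} (p : G.Walk u u) (h : ∀ x ∈ p.support, x ∈ s)
    (hp : p.IsCycle) : (induceWalk p h).IsCycle := by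
  rw [← SimpleGraph.Walk.map_isCycle_iff_of_injective (f := (SimpleGraph.Embedding.induce s).toHom)
    Subtype.val_injective] at *
  rwa [induceWalk_map p h]

lemma mem_induceWalk_support {u v : V} (p : G.Walk u v) (h : ∀ x ∈ p.support, x ∈ s)
    (x : s) (hx : (x : V) ∈ p.support) : x ∈ (induceWalk p h).support := by
  have := induceWalk_support p h
  rw [← this] at hx
  obtain ⟨y, hy, hyx⟩ := List.mem_map.mp hx
  rwa [Subtype.val_injective hyx] at hy

/-- within any walk's support, any two support vertices are joined by a path staying in it -/
lemma path_in_support {W : Type*} [DecidableEq W] {F : SimpleGraph W} {a b : W}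
    (p : F.Walk a b) {x y : W} (hx : x ∈ p.support) (hy : y ∈ p.support) :
    ∃ w : F.Walk x y, w.IsPath ∧ ∀ z ∈ w.support, z ∈ p.support := by
  refine ⟨((p.takeUntil x hx).reverse.append (p.takeUntil y hy)).bypass,
    SimpleGraph.Walk.bypass_isPath _, fun z hz => ?_⟩
  have h1 := SimpleGraph.Walk.support_bypass_subset _ hz
  rw [SimpleGraph.Walk.mem_support_append_iff] at h1
  rcases h1 with h1 | h1
  · rw [SimpleGraph.Walk.support_reverse, List.mem_reverse] at h1
    exact SimpleGraph.Walk.support_takeUntil_subset _ _ h1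
  · exact SimpleGraph.Walk.support_takeUntil_subset _ _ h1

end ForestAux

namespace ForestAux

open SimpleGraph Walk

variable {V : Type*} {G : SimpleGraph V} {Q : Set V}

lemma blocker_hit (hQ : (G.induce Qᶜ).IsAcyclic) {v : V} (c : G.Walk v v) (hc : c.IsCycle) :
    ∃ q ∈ c.support, q ∈ Q := by
  by_contra h
  push_neg at h
  have h' : ∀ x ∈ c.support, x ∈ Qᶜ := fun x hx => h x hx
  exact hQ _ (induceWalk_isCycle c h' hc)

lemma mem_rotate_support [DecidableEq V] {v u : V} {c : G.Walk v v} (h : u ∈ c.support)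
    (x : V) : x ∈ (c.rotate u h).support ↔ x ∈ c.support := by
  rw [SimpleGraph.Walk.rotate, SimpleGraph.Walk.mem_support_append_iff]
  conv_rhs => rw [← c.take_spec h]
  rw [SimpleGraph.Walk.mem_support_append_iff]
  exact or_comm

lemma pathPart {q : V} (c : G.Walk q q) (hc : c.IsCycle) :
    ∃ (w₁ w₂ : V) (p : G.Walk w₁ w₂), p.IsPath ∧
      (∀ x, x ∈ p.support ↔ (x ∈ c.support ∧ x ≠ q)) := by
  have hlen := hc.three_le_length
  cases c with
  | nil => simp at hlen
  | cons ha p =>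
    rename_i w
    -- p : G.Walk w q
    have hpnodup : p.support.Nodup := by
      have := hc.2
      simpa using this
    have hwq : q ≠ w := ha.ne
    obtain ⟨w₂, ha₂, p₂, hp₂⟩ := SimpleGraph.Walk.exists_eq_cons_of_ne hwq p.reverse
    have hsupp : p.support.reverse = q :: p₂.support := by
      rw [← SimpleGraph.Walk.support_reverse, hp₂, SimpleGraph.Walk.support_cons]
    have hsubnodup : (q :: p₂.support).Nodup := by
      rw [← hsupp]
      exact List.nodup_reverse.mpr hpnodup
    refine ⟨w₂, w, p₂, SimpleGraph.Walk.IsPath.mk' (List.Nodup.of_cons hsubnodup), fun x => ?_⟩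
    have hqnot : q ∉ p₂.support := (List.nodup_cons.mp hsubnodup).1
    have hxp : x ∈ p.support ↔ x = q ∨ x ∈ p₂.support := by
      rw [← List.mem_reverse, hsupp, List.mem_cons]
    constructor
    · intro hx
      refine ⟨?_, fun hxq => hqnot (hxq ▸ hx)⟩
      simp only [SimpleGraph.Walk.support_cons, List.mem_cons]
      right
      exact hxp.mpr (Or.inr hx)
    · rintro ⟨hx, hxq⟩
      simp only [SimpleGraph.Walk.support_cons, List.mem_cons] at hx
      rcases hx with rfl | hx
      · exact absurd rfl hxq
      · rcases hxp.mp hx with rfl | hx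
        · exact absurd rfl hxq
        · exact hx

end ForestAux

namespace ForestAux

open SimpleGraph Walk

variable {V : Type*} {G : SimpleGraph V} {Q : Set V}

def PackAvoid (G : SimpleGraph V) (R : Set V) (m : ℕ) : Prop :=
  ∃ c : Fin m → (Σ v : V, G.Walk v v),
    (∀ i, (c i).2.IsCycle) ∧ (∀ i, ∀ v ∈ (c i).2.support, v ∉ R) ∧
    (∀ i j, i ≠ j → ∀ v, v ∈ (c i).2.support → v ∉ (c j).2.support)

theorem mainLemma [Fintype V] (hQ : (G.induce Qᶜ).IsAcyclic) (k : ℕ) :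
    ∀ R : Set V, ¬ PackAvoid G R (k + 1) →
    ∃ S ⊆ Q, S.ncard ≤ k ∧ ∃ A ⊆ Qᶜ, A.ncard ≤ k ∧
      ∀ (v : V) (c : G.Walk v v), c.IsCycle → (∀ u ∈ c.support, u ∉ R) →
        (∀ u ∈ c.support, u ∉ S) → 2 ≤ ({u : V | u ∈ c.support} ∩ (Q ∪ A)).ncard := by
  classical
  induction k with
  | zero =>
    intro R hpack
    refine ⟨∅, by simp, by simp, ∅, by simp, by simp, ?_⟩
    intro v c hc hcR _
    exact absurd ⟨fun _ => ⟨v, c⟩, fun _ => hc, fun _ => hcR,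
      fun i j hij => absurd (Subsingleton.elim (α := Fin 1) i j) hij⟩ hpack
  | succ k IH =>
    intro R hpack
    set F := G.induce Qᶜ with hF
    set Sing : (Σ q : V, G.Walk q q) → Prop := fun s => s.2.IsCycle ∧
      (∀ u ∈ s.2.support, u ∉ R) ∧ s.1 ∈ Q ∧
      (∀ u ∈ s.2.support, u ∈ Q → u = s.1) with hSingDef
    by_cases hsing : ∃ s, Sing s
    case neg =>
      refine ⟨∅, by simp, by simp, ∅, by simp, by simp, ?_⟩
      intro v c hc hcR hcS
      obtain ⟨q0, hq0s, hq0Q⟩ := blocker_hit hQ c hc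
      have hex : ∃ q1 ∈ c.support, q1 ∈ Q ∧ q1 ≠ q0 := by
        by_contra hno
        push_neg at hno
        refine hsing ⟨⟨q0, c.rotate q0 hq0s⟩, hc.rotate hq0s, ?_, hq0Q, ?_⟩
        · intro u hu
          exact hcR u ((mem_rotate_support hq0s u).mp hu)
        · intro u hu huQ
          exact hno u ((mem_rotate_support hq0s u).mp hu) huQ
      obtain ⟨q1, hq1s, hq1Q, hq1ne⟩ := hex
      have h2 : 1 < ({u : V | u ∈ c.support} ∩ (Q ∪ (∅ : Set V))).ncard := by
        rw [Set.one_lt_ncard_iff (Set.toFinite _)]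
        exact ⟨q1, q0, ⟨hq1s, Or.inl hq1Q⟩, ⟨hq0s, Or.inl hq0Q⟩, hq1ne⟩
      omega
    case pos =>
      -- the T-set of a singular cycle
      set T : (Σ q : V, G.Walk q q) → Set ↥Qᶜ := fun s => {x : ↥Qᶜ | ↑x ∈ s.2.support}
        with hTdef
      have hsub : ∀ s, Sing s → ∀ {w₁ w₂ : V} (p : G.Walk w₁ w₂),
          (∀ x, x ∈ p.support ↔ (x ∈ s.2.support ∧ x ≠ s.1)) →
          ∀ x ∈ p.support, x ∈ Qᶜ := by
        intro s hss w₁ w₂ p hiff x hx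
        obtain ⟨hx1, hx2⟩ := (hiff x).mp hx
        intro hxQ
        exact hx2 (hss.2.2.2 x hx1 hxQ)
      have hTne : ∀ s, Sing s → (T s).Nonempty := by
        intro s hss
        obtain ⟨w₁, w₂, p, hp, hiff⟩ := pathPart s.2 hss.1
        have hw₁ := p.start_mem_support
        exact ⟨⟨w₁, hsub s hss p hiff w₁ hw₁⟩, ((hiff w₁).mp hw₁).1⟩
      have hConn : ∀ s, Sing s → ConnIn F (T s) := by
        intro s hss a ha b hb
        obtain ⟨w₁, w₂, p, hp, hiff⟩ := pathPart s.2 hss.1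
        have hsub' := hsub s hss p hiff
        have hmem : ∀ z : ↥Qᶜ, z ∈ T s → (z : V) ∈ p.support := by
          intro z hz
          refine (hiff _).mpr ⟨hz, ?_⟩
          intro hzq
          exact z.2 (hzq ▸ hss.2.2.1)
        have hmem' : ∀ z : ↥Qᶜ, (z : V) ∈ p.support → z ∈ T s := by
          intro z hz
          exact ((hiff _).mp hz).1
        have ha' : a ∈ (induceWalk p hsub').support :=
          mem_induceWalk_support p hsub' a (hmem a ha)
        have hb' : b ∈ (induceWalk p hsub').support :=
          mem_induceWalk_support p hsub' b (hmem b hb)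
        obtain ⟨w, hwp, hws⟩ := path_in_support (induceWalk p hsub') ha' hb'
        refine ⟨w, hwp, fun z hz => ?_⟩
        have : (z : V) ∈ (induceWalk p hsub').support.map Subtype.val :=
          List.mem_map_of_mem (hws z hz)
        rw [induceWalk_support] at this
        exact hmem' z this
      -- minimal depth data
      set md : (Σ q : V, G.Walk q q) → ℕ := fun s => sInf (dep F '' T s) with hmd
      have hmin : ∀ s, Sing s → ∃ vs : ↥Qᶜ, vs ∈ T s ∧ dep F vs = md s ∧
          ∀ z ∈ T s, dep F vs ≤ dep F z := by
        intro s hss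
        have hne : (dep F '' T s).Nonempty := (hTne s hss).image _
        obtain ⟨vs, hvs, hvs'⟩ := Nat.sInf_mem hne
        exact ⟨vs, hvs, hvs', fun z hz => hvs' ▸ Nat.sInf_le ⟨z, hz, rfl⟩⟩
      -- choose the singular cycle with deepest top
      have hMfin : {n | ∃ s, Sing s ∧ md s = n}.Finite := by
        apply (Set.finite_range (dep F)).subset
        rintro n ⟨s, hss, rfl⟩
        obtain ⟨vs, _, hvs, _⟩ := hmin s hss
        exact ⟨vs, hvs⟩
      have hMne : {n | ∃ s, Sing s ∧ md s = n}.Nonempty := by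
        obtain ⟨s, hss⟩ := hsing
        exact ⟨md s, s, hss, rfl⟩
      obtain ⟨sstar, hsstar, hsmax⟩ : ∃ s, Sing s ∧ md s = sSup {n | ∃ s, Sing s ∧ md s = n} :=
        Nat.sSup_mem hMne hMfin.bddAbove
      have hmax : ∀ s, Sing s → md s ≤ md sstar := by
        intro s hss
        rw [hsmax]
        exact le_csSup hMfin.bddAbove ⟨s, hss, rfl⟩
      obtain ⟨vstar, hvT, hvdep, hvmin⟩ := hmin sstar hsstar
      -- apply induction hypothesis with the cycle removed
      have hpack' : ¬ PackAvoid G (R ∪ {u | u ∈ sstar.2.support}) (k + 1) := by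
        rintro ⟨cs, h1, h2, h3⟩
        apply hpack
        refine ⟨Fin.cons sstar (fun i => cs i), ?_, ?_, ?_⟩
        · intro i
          refine Fin.cases ?_ ?_ i
          · exact hsstar.1
          · intro j; exact h1 j
        · intro i
          refine Fin.cases ?_ ?_ i
          · exact hsstar.2.1
          · intro j v hv
            exact fun hvR => h2 j v hv (Or.inl hvR)
        · intro i j hij v hv hv'
          rcases Fin.eq_zero_or_eq_succ i with rfl | ⟨i', rfl⟩ <;>
            rcases Fin.eq_zero_or_eq_succ j with rfl | ⟨j', rfl⟩
          · exact hij rfl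
          · rw [Fin.cons_zero] at hv
            rw [Fin.cons_succ] at hv'
            exact h2 j' v hv' (Or.inr hv)
          · rw [Fin.cons_succ] at hv
            rw [Fin.cons_zero] at hv'
            exact h2 i' v hv (Or.inr hv')
          · rw [Fin.cons_succ] at hv
            rw [Fin.cons_succ] at hv'
            exact h3 i' j' (fun h => hij (by rw [h])) v hv hv'
      obtain ⟨S', hS'Q, hS'c, A', hA'Q, hA'c, hIH⟩ := IH _ hpack'
      refine ⟨insert sstar.1 S', Set.insert_subset hsstar.2.2.1 hS'Q, ?_,
        insert (↑vstar) A', Set.insert_subset vstar.2 hA'Q, ?_, ?_⟩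
      · exact le_trans (Set.ncard_insert_le _ _) (by omega)
      · exact le_trans (Set.ncard_insert_le _ _) (by omega)
      intro v c hc hcR hcS
      by_contra hlt
      push_neg at hlt
      obtain ⟨q0, hq0s, hq0Q⟩ := blocker_hit hQ c hc
      have hq0M : q0 ∈ {u : V | u ∈ c.support} ∩ (Q ∪ insert (↑vstar) A') :=
        ⟨hq0s, Or.inl hq0Q⟩
      have huniq : ∀ z ∈ {u : V | u ∈ c.support} ∩ (Q ∪ insert (↑vstar) A'), z = q0 := by
        intro z hz
        by_contra hne
        have : 1 < ({u : V | u ∈ c.support} ∩ (Q ∪ insert (↑vstar) A')).ncard :=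
          (Set.one_lt_ncard_iff (Set.toFinite _)).mpr ⟨z, q0, hz, hq0M, hne⟩
        omega
      have hsingc : ∀ u ∈ c.support, u ∈ Q → u = q0 :=
        fun u hu huQ => huniq u ⟨hu, Or.inl huQ⟩
      have hvnot : (↑vstar : V) ∉ c.support := by
        intro hvc
        have := huniq _ ⟨hvc, Or.inr (Set.mem_insert _ _)⟩
        exact vstar.2 (this ▸ hq0Q)
      have hSingc : Sing ⟨q0, c.rotate q0 hq0s⟩ := by
        refine ⟨hc.rotate hq0s, ?_, hq0Q, ?_⟩
        · intro u hu
          exact hcR u ((mem_rotate_support hq0s u).mp hu)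
        · intro u hu huQ
          exact hsingc u ((mem_rotate_support hq0s u).mp hu) huQ
      by_cases hmeet : ∃ x0, x0 ∈ c.support ∧ x0 ∈ sstar.2.support
      case neg =>
        push_neg at hmeet
        have h2' := hIH v c hc (fun u hu => by
            intro hR
            rcases hR with hR | hR
            · exact hcR u hu hR
            · exact hmeet u hu hR)
          (fun u hu hS => hcS u hu (Set.mem_insert_of_mem _ hS))
        have hsubset : {u : V | u ∈ c.support} ∩ (Q ∪ A') ⊆
            {u : V | u ∈ c.support} ∩ (Q ∪ insert (↑vstar) A') := by
          intro z ⟨hz1, hz2⟩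
          exact ⟨hz1, hz2.imp id (Set.mem_insert_of_mem _)⟩
        have := Set.ncard_le_ncard hsubset (Set.toFinite _)
        omega
      case pos =>
        obtain ⟨x0, hx0c, hx0s⟩ := hmeet
        by_cases hx0Q : x0 ∈ Q
        · have h1 : x0 = q0 := hsingc x0 hx0c hx0Q
          have h2' : x0 = sstar.1 := hsstar.2.2.2 x0 hx0s hx0Q
          exact hcS q0 hq0s (h1 ▸ h2' ▸ Set.mem_insert _ _)
        · obtain ⟨vc, hvcT, hvcdep, hvcmin⟩ := hmin _ hSingc
          have hle : dep F vc ≤ dep F vstar := by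
            rw [hvcdep, hvdep]
            exact hmax _ hSingc
          have hxT1 : (⟨x0, hx0Q⟩ : ↥Qᶜ) ∈ T sstar := hx0s
          have hxT2 : (⟨x0, hx0Q⟩ : ↥Qᶜ) ∈ T ⟨q0, c.rotate q0 hq0s⟩ := by
            show x0 ∈ (c.rotate q0 hq0s).support
            exact (mem_rotate_support hq0s x0).mpr hx0c
          have hvmem : vstar ∈ T ⟨q0, c.rotate q0 hq0s⟩ :=
            helly hQ (hConn sstar hsstar) (hConn _ hSingc) hxT1 hxT2 hvT hvcT hvmin hvcmin hle
          have : (↑vstar : V) ∈ c.support :=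
            (mem_rotate_support hq0s _).mp hvmem
          exact hvnot this

end ForestAux

/-- Given G with no k+1 disjoint cycles and a blocker Q, there are S ⊆ Q and
A ⊆ V(G) \ Q, each of size ≤ k, such that every cycle of G − S has ≥ 2 vertices in Q ∪ A. -/
theorem stmt_6 {V : Type*} [Fintype V] (k : ℕ) (G : SimpleGraph V)
    (hG : ¬ HasDisjointCycles G (k + 1)) (Q : Set V) (hQ : IsBlocker G Q) :
    ∃ S ⊆ Q, S.ncard ≤ k ∧ ∃ A ⊆ Qᶜ, A.ncard ≤ k ∧
      ∀ (v : V) (c : G.Walk v v), c.IsCycle → (∀ u ∈ c.support, u ∉ S) →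
        2 ≤ ({u : V | u ∈ c.support} ∩ (Q ∪ A)).ncard := by
  have hQ' : (G.induce Qᶜ).IsAcyclic := hQ
  have hpack : ¬ ForestAux.PackAvoid G ∅ (k + 1) := by
    rintro ⟨c, h1, _, h3⟩
    exact hG ⟨c, h1, h3⟩
  obtain ⟨S, hSQ, hSc, A, hAQ, hAc, h⟩ := ForestAux.mainLemma hQ' k ∅ hpack
  exact ⟨S, hSQ, hSc, A, hAQ, hAc, fun v c hc hcS => h v c hc (by simp) hcS⟩
end

section
/- For each positive integer t and each positive integer n, the number of forests F on vertex set {1,…,n} with at least t+1 connected components is at most |F_n| / t!. -/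
open SimpleGraph Filter Real

section Aux

variable {V : Type*}

lemma aux_walk_sup_edge {G : SimpleGraph V} {u v a b : V}
    (w : (G ⊔ SimpleGraph.edge u v).Walk a b) :
    G.Reachable a b ∨ (G.Reachable a u ∧ G.Reachable v b) ∨
      (G.Reachable a v ∧ G.Reachable u b) := by
  induction w with
  | nil => exact Or.inl (Reachable.refl _)
  | @cons x y z hxy p ih =>
    rcases (sup_adj _ _ _ _).mp hxy with h | h
    · rcases ih with r | ⟨r1, r2⟩ | ⟨r1, r2⟩
      · exact Or.inl (h.reachable.trans r)
      · exact Or.inr (Or.inl ⟨h.reachable.trans r1, r2⟩)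
      · exact Or.inr (Or.inr ⟨h.reachable.trans r1, r2⟩)
    · rw [edge_adj] at h
      obtain ⟨hc, -⟩ := h
      rcases hc with ⟨rfl, rfl⟩ | ⟨rfl, rfl⟩
      · rcases ih with r | ⟨r1, r2⟩ | ⟨r1, r2⟩
        · exact Or.inr (Or.inl ⟨Reachable.refl _, r⟩)
        · exact Or.inl (r1.symm.trans r2)
        · exact Or.inl r2
      · rcases ih with r | ⟨r1, r2⟩ | ⟨r1, r2⟩
        · exact Or.inr (Or.inr ⟨Reachable.refl _, r⟩)
        · exact Or.inl r2
        · exact Or.inl (r1.symm.trans r2)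

lemma aux_reach_sup_edge {G : SimpleGraph V} {u v a b : V}
    (h : (G ⊔ SimpleGraph.edge u v).Reachable a b) :
    G.Reachable a b ∨ (G.Reachable a u ∧ G.Reachable v b) ∨
      (G.Reachable a v ∧ G.Reachable u b) := by
  obtain ⟨w⟩ := h
  exact aux_walk_sup_edge w

lemma aux_card_cc_sup_edge [Finite V] {G : SimpleGraph V} {u v : V}
    (h : ¬G.Reachable u v) :
    Nat.card (G ⊔ SimpleGraph.edge u v).ConnectedComponent + 1
      = Nat.card G.ConnectedComponent := by
  classical
  have hne : u ≠ v := fun e => h (e ▸ Reachable.refl u)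
  set H := G ⊔ SimpleGraph.edge u v with hH
  have hadj : H.Adj u v := by
    rw [hH, sup_adj, edge_adj]
    exact Or.inr ⟨Or.inl ⟨rfl, rfl⟩, hne⟩
  -- the map on components
  let φ : G.ConnectedComponent → H.ConnectedComponent :=
    ConnectedComponent.map (Hom.ofLE le_sup_left)
  have hφmk : ∀ x : V, φ (G.connectedComponentMk x) = H.connectedComponentMk x := fun x => rfl
  let ψ : {C : G.ConnectedComponent // C ≠ G.connectedComponentMk v} →
      H.ConnectedComponent := fun C => φ C.1
  have hbij : Function.Bijective ψ := by
    constructor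
    · rintro ⟨C, hC⟩ ⟨D, hD⟩ hCD
      obtain ⟨a, rfl⟩ := C.exists_rep
      obtain ⟨b, rfl⟩ := D.exists_rep
      refine Subtype.ext ?_
      have : H.Reachable a b := by
        have := hCD
        simp only [ψ, hφmk] at this
        exact (ConnectedComponent.eq).mp this
      rcases aux_reach_sup_edge this with r | ⟨r1, r2⟩ | ⟨r1, r2⟩
      · exact ConnectedComponent.sound r
      · exact absurd (ConnectedComponent.sound r2.symm) hD
      · exact absurd (ConnectedComponent.sound r1) hC
    · intro C
      obtain ⟨a, rfl⟩ := C.exists_rep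
      by_cases ha : G.Reachable a v
      · refine ⟨⟨G.connectedComponentMk u, fun hc => h ((ConnectedComponent.eq).mp hc)⟩, ?_⟩
        show φ _ = _
        rw [hφmk]
        exact ConnectedComponent.sound (hadj.reachable.trans (ha.mono le_sup_left).symm)
      · exact ⟨⟨G.connectedComponentMk a, fun hc => ha ((ConnectedComponent.eq).mp hc)⟩,
          (hφmk a)⟩
  have h1 : Nat.card {C : G.ConnectedComponent // C ≠ G.connectedComponentMk v}
      = Nat.card H.ConnectedComponent := Nat.card_eq_of_bijective ψ hbij
  haveI : Fintype G.ConnectedComponent := Fintype.ofFinite _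
  haveI : Fintype H.ConnectedComponent := Fintype.ofFinite _
  rw [← h1]
  rw [Nat.card_eq_fintype_card, Nat.card_eq_fintype_card]
  have := Fintype.card_subtype_compl (fun C : G.ConnectedComponent =>
    C = G.connectedComponentMk v)
  rw [Fintype.card_subtype_eq] at this
  have hpos : 1 ≤ Fintype.card G.ConnectedComponent :=
    Fintype.card_pos_iff.mpr ⟨G.connectedComponentMk v⟩
  change Fintype.card {C : G.ConnectedComponent // ¬(C = G.connectedComponentMk v)} + 1 = _
  omega

end Aux

section Aux2
variable {V : Type*}

example {G : SimpleGraph V} {u v : V} : SimpleGraph.edge u v = fromEdgeSet {s(u,v)} := rfl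

-- graph identity: (F ⊔ edge u v) \ edge u v = F, given ¬F.Adj u v
lemma aux_sdiff_sup_edge {F : SimpleGraph V} {u v : V} (h : ¬F.Adj u v) :
    (F ⊔ SimpleGraph.edge u v) \ SimpleGraph.edge u v = F := by
  ext a b
  simp only [sdiff_adj, sup_adj, edge_adj]
  constructor
  · rintro ⟨hF | hE, hne⟩
    · exact hF
    · exact absurd hE hne
  · intro hF
    refine ⟨Or.inl hF, ?_⟩
    rintro ⟨⟨rfl, rfl⟩ | ⟨rfl, rfl⟩, -⟩
    · exact h hF
    · exact h hF.symm

lemma aux_isAcyclic_sup_edge {F : SimpleGraph V} {u v : V}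
    (hF : F.IsAcyclic) (h : ¬F.Reachable u v) : (F ⊔ SimpleGraph.edge u v).IsAcyclic := by
  have hne : u ≠ v := fun e => h (e ▸ Reachable.refl u)
  have hnadj : ¬F.Adj u v := fun ha => h ha.reachable
  rw [isAcyclic_iff_forall_adj_isBridge]
  intro a b hab
  rw [isBridge_iff]
  rw [deleteEdges]
  intro hreach
  by_cases hsame : s(a, b) = s(u, v)
  · have h1 : SimpleGraph.edge a b = SimpleGraph.edge u v := by
      show fromEdgeSet {s(a,b)} = fromEdgeSet {s(u,v)}
      rw [hsame]
    have h2 : (F ⊔ SimpleGraph.edge u v) \ fromEdgeSet {s(a, b)} = F := by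
      show (F ⊔ SimpleGraph.edge u v) \ SimpleGraph.edge a b = F
      rw [h1]; exact aux_sdiff_sup_edge hnadj
    rw [h2] at hreach
    rcases Sym2.eq_iff.mp hsame with ⟨rfl, rfl⟩ | ⟨rfl, rfl⟩
    · exact h hreach
    · exact h hreach.symm
  · have hFab : F.Adj a b := by
      rcases (sup_adj _ _ _ _).mp hab with h' | h'
      · exact h'
      · rw [edge_adj] at h'
        exfalso
        rcases h'.1 with ⟨rfl, rfl⟩ | ⟨rfl, rfl⟩
        · exact hsame rfl
        · exact hsame (Sym2.eq_swap)
    have hb := (isAcyclic_iff_forall_adj_isBridge.mp hF) hFab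
    rw [isBridge_iff] at hb
    have hnr : ¬(F \ fromEdgeSet {s(a, b)}).Reachable a b := hb
    have hgr : (F ⊔ SimpleGraph.edge u v) \ fromEdgeSet {s(a, b)}
        = (F \ fromEdgeSet {s(a, b)}) ⊔ SimpleGraph.edge u v := by
      ext x y
      simp only [sdiff_adj, sup_adj, edge_adj, fromEdgeSet_adj, Set.mem_singleton_iff]
      constructor
      · rintro ⟨hF' | hE, hne'⟩
        · exact Or.inl ⟨hF', hne'⟩
        · exact Or.inr hE
      · rintro (⟨hF', hne'⟩ | hE)
        · exact ⟨Or.inl hF', hne'⟩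
        · refine ⟨Or.inr hE, ?_⟩
          rintro ⟨hxy, -⟩
          apply hsame
          rw [← hxy]
          rcases hE.1 with ⟨rfl, rfl⟩ | ⟨rfl, rfl⟩
          · rfl
          · exact Sym2.eq_swap.symm
    rw [hgr] at hreach
    have hm : (F \ fromEdgeSet {s(a, b)}) ≤ F := sdiff_le
    rcases aux_reach_sup_edge hreach with r | ⟨r1, r2⟩ | ⟨r1, r2⟩
    · exact hnr r
    · exact h ((r1.mono hm).symm.trans (hFab.reachable.trans (r2.mono hm).symm))
    · exact h ((r2.mono hm).trans ((hFab.reachable.symm).trans (r1.mono hm)))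

end Aux2
section Aux3
variable {V : Type*}

lemma aux_isAcyclic_anti {G G' : SimpleGraph V} (h : G ≤ G') (hac : G'.IsAcyclic) :
    G.IsAcyclic := fun _ c hc => hac (c.mapLe h) (hc.mapLe h)

lemma aux_cc_card_le [Fintype V] (G : SimpleGraph V) :
    Nat.card G.ConnectedComponent ≤ Fintype.card V := by
  rw [← Nat.card_eq_fintype_card]
  exact Nat.card_le_card_of_surjective G.connectedComponentMk
    (fun C => C.exists_rep)

lemma aux_edge_count [Fintype V] :
    ∀ (e : ℕ) (H : SimpleGraph V), Nat.card H.edgeSet = e → H.IsAcyclic →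
      Nat.card H.edgeSet + Nat.card H.ConnectedComponent = Fintype.card V := by
  intro e
  induction e using Nat.strong_induction_on with
  | _ e ih =>
    intro H he hac
    by_cases hbot : H = ⊥
    · subst hbot
      have h0 : Nat.card (⊥ : SimpleGraph V).edgeSet = 0 := by
        simp [edgeSet_bot]
      have h1 : Nat.card V = Nat.card (⊥ : SimpleGraph V).ConnectedComponent :=
        Nat.card_eq_of_bijective (⊥ : SimpleGraph V).connectedComponentMk
          ⟨fun a b hab => reachable_bot.mp (ConnectedComponent.eq.mp hab),
           fun C => C.exists_rep⟩
      rw [h0, ← h1, Nat.card_eq_fintype_card]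
      omega
    · have hex : ∃ u v, H.Adj u v := by
        by_contra hc
        push_neg at hc
        exact hbot (by ext a b; simp [hc a b])
      obtain ⟨u, v, huv⟩ := hex
      set F := H \ SimpleGraph.edge u v with hFdef
      have hsup : F ⊔ SimpleGraph.edge u v = H := by
        ext a b
        simp only [hFdef, sup_adj, sdiff_adj, edge_adj]
        constructor
        · rintro (⟨hH, -⟩ | ⟨⟨rfl, rfl⟩ | ⟨rfl, rfl⟩, -⟩)
          · exact hH
          · exact huv
          · exact huv.symm
        · intro hH
          by_cases hE : ((a = u ∧ b = v) ∨ (a = v ∧ b = u)) ∧ a ≠ b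
          · exact Or.inr hE
          · exact Or.inl ⟨hH, hE⟩
      have hb := (isAcyclic_iff_forall_adj_isBridge.mp hac) huv
      rw [isBridge_iff] at hb
      have hnF : ¬F.Reachable u v := hb
      have hFac : F.IsAcyclic := aux_isAcyclic_anti sdiff_le hac
      have hcc : Nat.card H.ConnectedComponent + 1 = Nat.card F.ConnectedComponent := by
        have h2 := aux_card_cc_sup_edge hnF
        rw [hsup] at h2
        exact h2
      have hce : Nat.card F.edgeSet + 1 = Nat.card H.edgeSet := by
        have hes : F.edgeSet = H.edgeSet \ {s(u, v)} := by
          rw [hFdef, edgeSet_sdiff, edge_edgeSet_of_ne huv.ne]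
        rw [Nat.card_coe_set_eq, Nat.card_coe_set_eq, hes]
        exact Set.ncard_diff_singleton_add_one ((H.mem_edgeSet).mpr huv)
      have hlt : Nat.card F.edgeSet < e := by omega
      have := ih _ hlt F rfl hFac
      omega

end Aux3
section Aux4
open Finset
variable {V : Type*}

set_option maxHeartbeats 1000000 in
lemma aux_crossing_lb [Fintype V] {F : SimpleGraph V} {k r : ℕ} (hk : 1 ≤ k)
    (hcard : Fintype.card V = k + r) (hr : 1 ≤ r)
    (hc : k + 1 ≤ Nat.card F.ConnectedComponent) :
    2 * k * r ≤ Nat.card {p : V × V // ¬F.Reachable p.1 p.2} := by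
  classical
  haveI : Fintype F.ConnectedComponent := Fintype.ofFinite _
  set m := Fintype.card F.ConnectedComponent with hm
  have hmk : k + 1 ≤ m := by rwa [Nat.card_eq_fintype_card] at hc
  set f : F.ConnectedComponent → ℕ :=
    fun C => (Finset.univ.filter fun x : V => F.connectedComponentMk x = C).card with hf
  have h1 : ∑ C, f C = k + r := by
    rw [hf, ← hcard, ← Finset.card_univ]
    exact (Finset.card_eq_sum_card_fiberwise (f := F.connectedComponentMk)
      (t := Finset.univ) (fun x _ => Finset.mem_univ _)).symm
  have h2 : ∀ C, 1 ≤ f C := fun C => by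
    obtain ⟨x, hx⟩ := C.exists_rep
    exact Finset.card_pos.mpr ⟨x, Finset.mem_filter.mpr ⟨Finset.mem_univ _, hx⟩⟩
  have hmkr : m ≤ k + r := by
    calc m = ∑ _C : F.ConnectedComponent, 1 := by simp [hm]
    _ ≤ ∑ C, f C := Finset.sum_le_sum (fun C _ => h2 C)
    _ = k + r := h1
  set X := Finset.univ.filter (fun p : V × V => ¬F.Reachable p.1 p.2) with hX
  have h3 : X.card = ∑ CD ∈ (Finset.univ : Finset F.ConnectedComponent).offDiag, f CD.1 * f CD.2 := by
    rw [Finset.card_eq_sum_card_fiberwise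
      (f := fun p : V × V => (F.connectedComponentMk p.1, F.connectedComponentMk p.2))
      (t := (Finset.univ : Finset F.ConnectedComponent).offDiag) ?_]
    · apply Finset.sum_congr rfl
      intro CD hCD
      have hne : CD.1 ≠ CD.2 := (Finset.mem_offDiag.mp hCD).2.2
      have heq : X.filter (fun p : V × V =>
          (F.connectedComponentMk p.1, F.connectedComponentMk p.2) = CD) =
          (Finset.univ.filter fun x : V => F.connectedComponentMk x = CD.1) ×ˢ
          (Finset.univ.filter fun x : V => F.connectedComponentMk x = CD.2) := by
        ext p
        simp only [hX, Finset.mem_filter, Finset.mem_product, Finset.mem_univ, true_and,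
          Prod.ext_iff, Finset.filter_filter]
        constructor
        · rintro ⟨-, ha, hb⟩
          exact ⟨ha, hb⟩
        · rintro ⟨ha, hb⟩
          refine ⟨?_, ha, hb⟩
          intro hre
          exact hne (by rw [← ha, ← hb]; exact ConnectedComponent.sound hre)
      rw [heq, Finset.card_product]
    · intro p hp
      rw [hX, Finset.mem_coe, Finset.mem_filter] at hp
      exact Finset.mem_offDiag.mpr ⟨Finset.mem_univ _, Finset.mem_univ _,
        fun hEq => hp.2 (ConnectedComponent.eq.mp hEq)⟩
  have h4 : ∑ CD ∈ (Finset.univ : Finset F.ConnectedComponent).offDiag, (f CD.1 + f CD.2)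
      ≤ (∑ CD ∈ (Finset.univ : Finset F.ConnectedComponent).offDiag, f CD.1 * f CD.2) + (Finset.univ : Finset F.ConnectedComponent).offDiag.card := by
    rw [Finset.card_eq_sum_ones, ← Finset.sum_add_distrib]
    refine Finset.sum_le_sum (fun CD _ => ?_)
    have ha := h2 CD.1
    have hb := h2 CD.2
    nlinarith
  have h5 : ∑ CD ∈ (Finset.univ ×ˢ Finset.univ : Finset (F.ConnectedComponent × F.ConnectedComponent)),
      (f CD.1 + f CD.2) = 2 * (m * (k + r)) := by
    rw [Finset.sum_product]
    have hin : ∀ C : F.ConnectedComponent, ∑ D, (f C + f D) = m * f C + (k + r) := by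
      intro C
      rw [Finset.sum_add_distrib, Finset.sum_const, h1, Finset.card_univ, smul_eq_mul, mul_comm]
    rw [Finset.sum_congr rfl (fun C _ => hin C), Finset.sum_add_distrib, ← Finset.mul_sum, h1,
      Finset.sum_const, Finset.card_univ, smul_eq_mul]
    ring
  have hdiag : (Finset.univ : Finset F.ConnectedComponent).diag
      = Finset.univ.image (fun C : F.ConnectedComponent => (C, C)) := by
    ext ⟨a, b⟩
    simp only [Finset.mem_diag, Finset.mem_image, Finset.mem_univ, true_and, Prod.ext_iff]
    constructor
    · rintro rfl; exact ⟨a, rfl, rfl⟩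
    · rintro ⟨c, rfl, rfl⟩; rfl
  have h6 : ∑ CD ∈ (Finset.univ : Finset F.ConnectedComponent).diag, (f CD.1 + f CD.2)
      = 2 * (k + r) := by
    rw [hdiag, Finset.sum_image (by intro a _ b _ hab; exact (Prod.ext_iff.mp hab).1)]
    show ∑ C, (f C + f C) = 2 * (k + r)
    rw [Finset.sum_add_distrib, h1]
    omega
  have h7 := Finset.sum_union (f := fun CD : F.ConnectedComponent × F.ConnectedComponent =>
    f CD.1 + f CD.2) (Finset.disjoint_diag_offDiag
      (Finset.univ : Finset F.ConnectedComponent))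
  rw [Finset.diag_union_offDiag] at h7
  have hsum2 : (∑ CD ∈ (Finset.univ : Finset F.ConnectedComponent).offDiag, (f CD.1 + f CD.2)) + 2 * (k + r)
      = 2 * (m * (k + r)) := by
    have h7' : (∑ CD ∈ (Finset.univ ×ˢ Finset.univ :
        Finset (F.ConnectedComponent × F.ConnectedComponent)), (f CD.1 + f CD.2))
        = (∑ CD ∈ (Finset.univ : Finset F.ConnectedComponent).diag, (f CD.1 + f CD.2))
          + (∑ CD ∈ (Finset.univ : Finset F.ConnectedComponent).offDiag, (f CD.1 + f CD.2)) := h7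
    rw [h7', h6] at h5
    omega
  have h8 : (Finset.univ : Finset F.ConnectedComponent).offDiag.card + m
      = m * m := by
    rw [Finset.offDiag_card, Finset.card_univ, ← hm]
    have hmm : m ≤ m * m := Nat.le_mul_of_pos_left m (by omega)
    omega
  have hXcard : Nat.card {p : V × V // ¬F.Reachable p.1 p.2} = X.card := by
    rw [Nat.card_eq_fintype_card, hX, Fintype.card_subtype]
  rw [hXcard, h3]
  obtain ⟨d, hd⟩ : ∃ d, m = k + 1 + d := ⟨m - (k + 1), by omega⟩
  obtain ⟨e2, he2⟩ : ∃ e2, r = d + 1 + e2 := ⟨r - d - 1, by omega⟩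
  have key : 2 * k * r ≤ (k + d) * (k + r + e2) := by nlinarith
  nlinarith [h4, hsum2, h8, key]

end Aux4
section Aux5
variable {V : Type*}

lemma aux_adj_ub [Fintype V] {H : SimpleGraph V} {k r : ℕ}
    (hcard : Fintype.card V = k + r) (hac : H.IsAcyclic)
    (hc : k ≤ Nat.card H.ConnectedComponent) :
    Nat.card {p : V × V // H.Adj p.1 p.2} ≤ 2 * r := by
  classical
  have hE := aux_edge_count (Nat.card H.edgeSet) H rfl hac
  have hedge : Nat.card H.edgeSet ≤ r := by omega
  have hd : Nat.card {p : V × V // H.Adj p.1 p.2} = 2 * Nat.card H.edgeSet := by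
    have he : Nat.card {p : V × V // H.Adj p.1 p.2} = Fintype.card H.Dart := by
      rw [Nat.card_eq_fintype_card]
      exact Fintype.card_congr
        ⟨fun p => ⟨p.1, p.2⟩, fun d => ⟨d.toProd, d.adj⟩,
         fun p => rfl, fun d => rfl⟩
    rw [he, SimpleGraph.dart_card_eq_twice_card_edges]
    congr 1
    rw [Nat.card_eq_fintype_card, SimpleGraph.edgeFinset, Set.toFinset_card]
  omega

end Aux5
section Aux6

lemma aux_step {n j : ℕ} (hjn : j + 1 < n) :
    (j + 1) * Nat.card {F : SimpleGraph (Fin n) //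
        F.IsAcyclic ∧ (j + 1) + 1 ≤ Nat.card F.ConnectedComponent}
      ≤ Nat.card {F : SimpleGraph (Fin n) //
        F.IsAcyclic ∧ j + 1 ≤ Nat.card F.ConnectedComponent} := by
  classical
  set k := j + 1 with hk
  obtain ⟨r, hr1, hnkr⟩ : ∃ r, 1 ≤ r ∧ n = k + r := ⟨n - k, by omega, by omega⟩
  have hVcard : Fintype.card (Fin n) = k + r := by simp [hnkr]
  let A := {F : SimpleGraph (Fin n) // F.IsAcyclic ∧ k + 1 ≤ Nat.card F.ConnectedComponent}
  let B := {F : SimpleGraph (Fin n) // F.IsAcyclic ∧ k ≤ Nat.card F.ConnectedComponent}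
  let P := {x : SimpleGraph (Fin n) × (Fin n × Fin n) //
      x.1.IsAcyclic ∧ k + 1 ≤ Nat.card x.1.ConnectedComponent ∧ ¬x.1.Reachable x.2.1 x.2.2}
  let Q := {x : SimpleGraph (Fin n) × (Fin n × Fin n) //
      x.1.IsAcyclic ∧ k ≤ Nat.card x.1.ConnectedComponent ∧ x.1.Adj x.2.1 x.2.2}
  -- step 1 : A × Fin (2*k*r) ↪ P
  have hstep1 : Nat.card A * (2 * k * r) ≤ Nat.card P := by
    have hemb : ∀ F : A, ∃ g : Fin (2 * k * r) → {p : Fin n × Fin n // ¬F.1.Reachable p.1 p.2},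
        Function.Injective g := by
      intro F
      have hlb := aux_crossing_lb (F := F.1) (by omega) hVcard hr1 F.2.2
      haveI : Fintype {p : Fin n × Fin n // ¬F.1.Reachable p.1 p.2} := Fintype.ofFinite _
      have hcle : Fintype.card (Fin (2 * k * r))
          ≤ Fintype.card {p : Fin n × Fin n // ¬F.1.Reachable p.1 p.2} := by
        rw [Fintype.card_fin, ← Nat.card_eq_fintype_card]
        exact hlb
      obtain ⟨g⟩ := Function.Embedding.nonempty_of_card_le hcle
      exact ⟨g, g.injective⟩
    choose g hg using hemb
    have hinj : Function.Injective (fun x : A × Fin (2 * k * r) =>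
        (⟨(x.1.1, (g x.1 x.2).1), x.1.2.1, x.1.2.2, (g x.1 x.2).2⟩ : P)) := by
      rintro ⟨F, i⟩ ⟨F', i'⟩ h
      have h1 : F.1 = F'.1 := congrArg (fun y : P => y.1.1) h
      have hFF : F = F' := Subtype.ext h1
      subst hFF
      have h2 : (g F i).1 = (g F i').1 := congrArg (fun y : P => y.1.2) h
      have h3 : g F i = g F i' := Subtype.ext h2
      have h4 : i = i' := hg F h3
      rw [h4]
    calc Nat.card A * (2 * k * r) = Nat.card (A × Fin (2 * k * r)) := by
          rw [Nat.card_prod, Nat.card_eq_fintype_card (α := Fin (2 * k * r)), Fintype.card_fin]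
    _ ≤ Nat.card P := Nat.card_le_card_of_injective _ hinj
  -- step 2 : P ↪ Q
  have hstep2 : Nat.card P ≤ Nat.card Q := by
    have hmap : ∀ x : P, (x.1.1 ⊔ SimpleGraph.edge x.1.2.1 x.1.2.2).IsAcyclic ∧
        k ≤ Nat.card (x.1.1 ⊔ SimpleGraph.edge x.1.2.1 x.1.2.2).ConnectedComponent ∧
        (x.1.1 ⊔ SimpleGraph.edge x.1.2.1 x.1.2.2).Adj x.1.2.1 x.1.2.2 := by
      rintro ⟨⟨F, a, b⟩, hac, hcc, hnr⟩
      have hne : a ≠ b := fun e => hnr (e ▸ SimpleGraph.Reachable.refl a)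
      refine ⟨aux_isAcyclic_sup_edge hac hnr, ?_, ?_⟩
      · show k ≤ Nat.card (F ⊔ SimpleGraph.edge a b).ConnectedComponent
        have h1 := aux_card_cc_sup_edge (G := F) (u := a) (v := b) hnr
        have h2 : k + 1 ≤ Nat.card F.ConnectedComponent := hcc
        omega
      · show (F ⊔ SimpleGraph.edge a b).Adj a b
        rw [SimpleGraph.sup_adj, SimpleGraph.edge_adj]
        exact Or.inr ⟨Or.inl ⟨rfl, rfl⟩, hne⟩
    have hinj : Function.Injective (fun x : P =>
        (⟨(x.1.1 ⊔ SimpleGraph.edge x.1.2.1 x.1.2.2, x.1.2), hmap x⟩ : Q)) := by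
      rintro ⟨⟨F, a, b⟩, hx⟩ ⟨⟨F', a', b'⟩, hx'⟩ h
      have h1 : (F ⊔ SimpleGraph.edge a b, (a, b))
          = (F' ⊔ SimpleGraph.edge a' b', (a', b')) := congrArg Subtype.val h
      have h2 : a = a' := congrArg (fun y : _ × (Fin n × Fin n) => y.2.1) h1
      have h3 : b = b' := congrArg (fun y : _ × (Fin n × Fin n) => y.2.2) h1
      subst h2; subst h3
      have h4 : F ⊔ SimpleGraph.edge a b = F' ⊔ SimpleGraph.edge a b :=
        congrArg Prod.fst h1
      have hnadj : ¬F.Adj a b := fun hadj => hx.2.2 hadj.reachable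
      have hnadj' : ¬F'.Adj a b := fun hadj => hx'.2.2 hadj.reachable
      have h5 : F = F' := by
        rw [← aux_sdiff_sup_edge hnadj, ← aux_sdiff_sup_edge hnadj', h4]
      subst h5
      exact Subtype.ext rfl
    exact Nat.card_le_card_of_injective _ hinj
  -- step 3 : Q ↪ B × Fin (2*r)
  have hstep3 : Nat.card Q ≤ Nat.card B * (2 * r) := by
    have hemb : ∀ Hb : B, ∃ g : {p : Fin n × Fin n // Hb.1.Adj p.1 p.2} → Fin (2 * r),
        Function.Injective g := by
      intro Hb
      have hub := aux_adj_ub (H := Hb.1) hVcard Hb.2.1 Hb.2.2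
      haveI : Fintype {p : Fin n × Fin n // Hb.1.Adj p.1 p.2} := Fintype.ofFinite _
      have hcle : Fintype.card {p : Fin n × Fin n // Hb.1.Adj p.1 p.2}
          ≤ Fintype.card (Fin (2 * r)) := by
        rw [Fintype.card_fin, ← Nat.card_eq_fintype_card]
        exact hub
      obtain ⟨g⟩ := Function.Embedding.nonempty_of_card_le hcle
      exact ⟨g, g.injective⟩
    choose g hg using hemb
    have hinj : Function.Injective (fun x : Q =>
        ((⟨x.1.1, x.2.1, x.2.2.1⟩ : B),
          g ⟨x.1.1, x.2.1, x.2.2.1⟩ ⟨x.1.2, x.2.2.2⟩)) := by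
      rintro ⟨⟨F, p⟩, hx⟩ ⟨⟨F', p'⟩, hx'⟩ h
      have h1 : F = F' := congrArg (fun y : B × Fin (2 * r) => (y.1 : B).1) h
      subst h1
      have h2 := congrArg (fun y : B × Fin (2 * r) => y.2) h
      simp only at h2
      have h3 := hg ⟨F, hx.1, hx.2.1⟩ h2
      have h4 : p = p' := congrArg Subtype.val h3
      subst h4
      exact Subtype.ext rfl
    calc Nat.card Q ≤ Nat.card (B × Fin (2 * r)) := Nat.card_le_card_of_injective _ hinj
    _ = Nat.card B * (2 * r) := by
          rw [Nat.card_prod, Nat.card_eq_fintype_card (α := Fin (2 * r)), Fintype.card_fin]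
  -- combine
  have hcomb : Nat.card A * (2 * k * r) ≤ Nat.card B * (2 * r) :=
    le_trans hstep1 (le_trans hstep2 hstep3)
  have hfinal : k * Nat.card A ≤ Nat.card B := by
    have h2r : 0 < 2 * r := by omega
    apply Nat.le_of_mul_le_mul_right _ h2r
    calc k * Nat.card A * (2 * r) = Nat.card A * (2 * k * r) := by ring
    _ ≤ Nat.card B * (2 * r) := hcomb
  exact hfinal

end Aux6
/-- the number of forests on {1,…,n} with at least t+1 components is at
most |F_n| / t!. -/
theorem stmt_13 (t n : ℕ) (ht : 1 ≤ t) (hn : 1 ≤ n) :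
    (Nat.card {F : SimpleGraph (Fin n) // F.IsAcyclic ∧
        t + 1 ≤ Nat.card F.ConnectedComponent} : ℝ)
      ≤ (forestCount n : ℝ) / (Nat.factorial t : ℝ) := by
  classical
  set a : ℕ → ℕ := fun j => Nat.card {F : SimpleGraph (Fin n) //
      F.IsAcyclic ∧ j + 1 ≤ Nat.card F.ConnectedComponent} with ha
  have hzero : ∀ j, n ≤ j + 1 → a (j + 1) = 0 := by
    intro j hj
    rw [ha]
    haveI : IsEmpty {F : SimpleGraph (Fin n) //
        F.IsAcyclic ∧ (j + 1) + 1 ≤ Nat.card F.ConnectedComponent} := by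
      constructor
      rintro ⟨F, -, hcc⟩
      have h1 := aux_cc_card_le F
      rw [Fintype.card_fin] at h1
      omega
    exact Nat.card_of_isEmpty
  have hstep : ∀ j, (j + 1) * a (j + 1) ≤ a j := by
    intro j
    by_cases hj : j + 1 < n
    · exact aux_step hj
    · rw [hzero j (by omega)]
      simp
  have hfac : ∀ s, Nat.factorial s * a s ≤ a 0 := by
    intro s
    induction s with
    | zero => simp [Nat.factorial]
    | succ s ihs =>
      calc Nat.factorial (s + 1) * a (s + 1)
          = Nat.factorial s * ((s + 1) * a (s + 1)) := by rw [Nat.factorial_succ]; ring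
        _ ≤ Nat.factorial s * a s := Nat.mul_le_mul_left _ (hstep s)
        _ ≤ a 0 := ihs
  have hforest : a 0 ≤ forestCount n := by
    rw [ha, forestCount]
    exact Nat.card_le_card_of_injective
      (fun F : {F : SimpleGraph (Fin n) //
          F.IsAcyclic ∧ 0 + 1 ≤ Nat.card F.ConnectedComponent} => ⟨F.1, F.2.1⟩)
      (by rintro ⟨F, hF⟩ ⟨F', hF'⟩ h
          have hv : F = F' := congrArg Subtype.val h
          exact Subtype.ext hv)
  have hkey : a t * Nat.factorial t ≤ forestCount n := by
    rw [mul_comm]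
    exact le_trans (hfac t) hforest
  have hL : Nat.card {F : SimpleGraph (Fin n) // F.IsAcyclic ∧
      t + 1 ≤ Nat.card F.ConnectedComponent} = a t := by rw [ha]
  rw [hL, le_div_iff₀ (by exact_mod_cast Nat.factorial_pos t)]
  exact_mod_cast hkey
end

section
/- Let k be a positive integer, let G be a finite graph and let S0 be a set of k vertices of G such that: (a) G − S0 is a forest, and (b) for each vertex s ∈ S0 there are k+1 spikes of the forest G − S0 such that s is adjacent to both vertices of each of these spikes (so s forms a triangle with each). Then S0 is the unique blocker of size at most k in G: every blocker B of G with |B| ≤ k satisfies B = S0. -/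
open SimpleGraph Filter Real

lemma walk_mem_closed {W : Type*} {F : SimpleGraph W} (S : Set W)
    (hS : ∀ x ∈ S, ∀ y, F.Adj x y → y ∈ S) :
    ∀ {x y : W}, F.Walk x y → x ∈ S → y ∈ S := by
  intro x y p
  induction p with
  | nil => exact id
  | cons h p ih => exact fun hx => ih (hS _ hx _ h)

lemma nbhd_singleton {W : Type*} {F : SimpleGraph W} {u v : W}
    (h1 : (F.neighborSet u).ncard = 1) (h2 : F.Adj u v) : F.neighborSet u = {v} := by
  obtain ⟨a, ha⟩ := Set.ncard_eq_one.mp h1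
  have hv : v ∈ F.neighborSet u := h2
  rw [ha] at hv ⊢
  simp_all

lemma spike_disjoint {W : Type*} [Fintype W] {F : SimpleGraph W}
    {u v u' v' : W} (h1 : IsSpike F u v) (h2 : IsSpike F u' v')
    (hne : ¬ (u = u' ∧ v = v')) :
    u ≠ u' ∧ u ≠ v' ∧ v ≠ u' ∧ v ≠ v' := by
  obtain ⟨hadj, hnu, hnv, hcomp⟩ := h1
  obtain ⟨hadj', hnu', hnv', hcomp'⟩ := h2
  have hNu : F.neighborSet u = {v} := nbhd_singleton hnu hadj
  have hNu' : F.neighborSet u' = {v'} := nbhd_singleton hnu' hadj'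
  have huv' : u ≠ v' := fun h => by rw [h] at hnu; omega
  have hvu' : v ≠ u' := fun h => by rw [h] at hnv; omega
  have huu' : u ≠ u' := by
    intro h
    apply hne
    refine ⟨h, ?_⟩
    have hvv : ({v} : Set W) = {v'} := by rw [← hNu, h, hNu']
    exact Set.singleton_eq_singleton_iff.mp hvv
  refine ⟨huu', huv', hvu', ?_⟩
  intro hvv'
  subst hvv'
  have hmemu : u ∈ F.neighborSet v := hadj.symm
  have hmemu' : u' ∈ F.neighborSet v := hadj'.symm
  have hsub : ({u, u'} : Set W) ⊆ F.neighborSet v := by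
    intro x hx; rcases hx with h | h <;> subst h <;> assumption
  have hNv : F.neighborSet v = {u, u'} := by
    refine (Set.eq_of_subset_of_ncard_le hsub ?_ (Set.toFinite _)).symm
    rw [hnv, Set.ncard_pair huu']
  have hnadj : ¬ F.Adj u u' := by
    intro h
    have hm : u' ∈ F.neighborSet u := h
    rw [hNu] at hm
    exact hvu' (Set.mem_singleton_iff.mp hm).symm
  apply hcomp
  refine ⟨u, v, u', hadj.ne, hadj'.ne.symm, huu', hadj, hadj'.symm, hnadj, ?_⟩
  have hclosed : ∀ x ∈ ({u, v, u'} : Set W), ∀ y, F.Adj x y → y ∈ ({u, v, u'} : Set W) := by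
    intro x hx y hy
    rcases hx with h | h | h
    · rw [h] at hy
      have hym : y ∈ F.neighborSet u := hy
      rw [hNu] at hym; simp_all
    · rw [h] at hy
      have hym : y ∈ F.neighborSet v := hy
      rw [hNv] at hym
      rcases hym with h2 | h2 <;> simp_all
    · rw [h] at hy
      have hym : y ∈ F.neighborSet u' := hy
      rw [hNu'] at hym; simp_all
  ext w
  simp only [ConnectedComponent.mem_supp_iff, ConnectedComponent.eq]
  constructor
  · intro hr
    obtain ⟨q⟩ := hr.symm
    exact walk_mem_closed _ hclosed q (by simp)
  · intro hw
    rcases hw with h | h | h <;> subst h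
    · exact Reachable.refl _
    · exact hadj.symm.reachable
    · exact hadj'.reachable.trans hadj.reachable.symm

/-- if G − S0 is a forest and each s ∈ S0 forms triangles with k+1 distinct
spikes of G − S0, then S0 is the unique blocker of size at most k in G. -/
theorem stmt_16 {V : Type*} [Fintype V] [DecidableEq V] (k : ℕ) (hk : 1 ≤ k)
    (G : SimpleGraph V) (S0 : Finset V) (hcard : S0.card = k)
    (hforest : (G.induce ((S0 : Set V)ᶜ)).IsAcyclic)
    (hspikes : ∀ s ∈ S0,
      ∃ p : Fin (k + 1) → (((S0 : Set V)ᶜ : Set V) × ((S0 : Set V)ᶜ : Set V)),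
        Function.Injective p ∧
        ∀ i, IsSpike (G.induce ((S0 : Set V)ᶜ)) (p i).1 (p i).2 ∧
          G.Adj s ((p i).1 : V) ∧ G.Adj s ((p i).2 : V)) :
    ∀ B : Finset V, B.card ≤ k → IsBlocker G ↑B → B = S0 := by
  intro B hBcard hB
  have hsub : S0 ⊆ B := by
    intro s hs
    by_contra hsB
    obtain ⟨p, hpinj, hp⟩ := hspikes s hs
    have hchoice : ∀ i : Fin (k+1), ((p i).1 : V) ∈ B ∨ ((p i).2 : V) ∈ B := by
      intro i
      by_contra hcon
      push_neg at hcon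
      obtain ⟨hu, hv⟩ := hcon
      obtain ⟨hsp, hsu, hsv⟩ := hp i
      have huv : G.Adj ((p i).1 : V) ((p i).2 : V) := hsp.1
      have hsB' : (s : V) ∈ ((B : Set V)ᶜ) := by simpa using hsB
      have hu' : ((p i).1 : V) ∈ ((B : Set V)ᶜ) := by simpa using hu
      have hv' : ((p i).2 : V) ∈ ((B : Set V)ᶜ) := by simpa using hv
      set H := G.induce ((B : Set V)ᶜ) with hH
      have hadj1 : H.Adj ⟨_, hu'⟩ ⟨_, hv'⟩ := huv
      have hadj2 : H.Adj ⟨_, hu'⟩ ⟨_, hsB'⟩ := hsu.symm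
      have hadj3 : H.Adj ⟨_, hsB'⟩ ⟨_, hv'⟩ := hsv
      have hpath2 : (Walk.cons hadj2 (Walk.cons hadj3 Walk.nil)).IsPath := by
        rw [Walk.isPath_def]
        simp only [Walk.support_cons, Walk.support_nil]
        refine List.nodup_cons.2 ⟨?_, List.nodup_cons.2 ⟨?_, List.nodup_singleton _⟩⟩
        · simp only [List.mem_cons, List.mem_singleton, List.not_mem_nil, or_false]
          rintro (h | h)
          · exact hsu.ne' (Subtype.ext_iff.1 h)
          · exact huv.ne (congrArg (fun x : ↥((B : Set V)ᶜ) => (x : V)) h)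
        · simp only [List.mem_singleton, List.mem_cons, List.not_mem_nil, or_false]
          intro h
          exact hsv.ne (Subtype.ext_iff.1 h)
      have := hB.path_unique (Path.singleton hadj1) ⟨_, hpath2⟩
      have hlen := congrArg (fun q : H.Path _ _ => q.1.length) this
      simp [Path.singleton] at hlen
    classical
    have hdis : ∀ i j : Fin (k+1), i ≠ j →
        ((p i).1 ≠ (p j).1 ∧ (p i).1 ≠ (p j).2 ∧ (p i).2 ≠ (p j).1 ∧ (p i).2 ≠ (p j).2) := by
      intro i j hij
      refine spike_disjoint (hp i).1 (hp j).1 ?_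
      rintro ⟨h1, h2⟩
      exact hij (hpinj (Prod.ext h1 h2))
    let f : Fin (k+1) → {x // x ∈ B} := fun i =>
      if h : ((p i).1 : V) ∈ B then ⟨_, h⟩ else ⟨_, (hchoice i).resolve_left h⟩
    have hfinj : Function.Injective f := by
      intro i j hfeq
      by_contra hij
      obtain ⟨d1, d2, d3, d4⟩ := hdis i j hij
      have hval := congrArg Subtype.val hfeq
      simp only [f] at hval
      by_cases h1 : ((p i).1 : V) ∈ B <;> by_cases h2 : ((p j).1 : V) ∈ B <;>
        simp only [dif_pos, dif_neg, h1, h2] at hval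
      · exact d1 (Subtype.coe_injective hval)
      · exact d2 (Subtype.coe_injective hval)
      · exact d3 (Subtype.coe_injective hval)
      · exact d4 (Subtype.coe_injective hval)
    have := Fintype.card_le_of_injective f hfinj
    simp [Fintype.card_coe] at this
    omega
  exact (Finset.eq_of_subset_of_card_le hsub (by rw [hcard]; exact hBcard)).symm
end
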